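/- arXiv:1301.2960 — 5 statements merged into one kernel-verified Lean document; each statement's English description precedes it below -/
import Mathlib

section
/- The point configuration Q³ = {−1, 0, 1}³ in ℝ³ is framed by its subset W = {−1, 1}³ ∪ {(0, 0, 0)} consisting of the eight vertices of the cube [−1, 1]³ together with the origin. -/
open scoped RealInnerProductSpace

noncomputable section

/-- `ℝ^n` with the Euclidean norm. -/
abbrev ESp (n : ℕ) := EuclideanSpace ℝ (Fin n)

/-- A polytope is the convex hull of a finite set of points. -/
def IsPolytope {n : ℕ} (P : Set (ESp n)) : Prop :=
  ∃ V : Finset (ESp n), P = convexHull ℝ (V : Set (ESp n))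

/-- The vertex set `F₀(P)` of a polytope: its extreme points. -/
def verts {n : ℕ} (P : Set (ESp n)) : Set (ESp n) := Set.extremePoints ℝ P

/-- The dimension of a polytope: the dimension of its affine hull. -/
def polyDim {n : ℕ} (P : Set (ESp n)) : ℕ :=
  Module.finrank ℝ (affineSpan ℝ P).direction

/-- The faces of a polytope `P` are `∅`, `P`, and the intersections of `P` with a
hyperplane having `P` in one of its closed sides. -/
def IsFaceOf {n : ℕ} (P F : Set (ESp n)) : Prop :=
  F = ∅ ∨ F = P ∨ ∃ (c : ESp n) (a : ℝ), c ≠ 0 ∧ (∀ x ∈ P, ⟪c, x⟫ ≤ a) ∧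
    F = {x ∈ P | ⟪c, x⟫ = a}

/-- Denominator `⟨c, x⟩ + δ` of the projective map given by an `(n+1)×(n+1)` matrix `M`
(the last row of `M` is `(c, δ)`). -/
def projDen {n : ℕ} (M : Matrix (Fin (n + 1)) (Fin (n + 1)) ℝ) (x : ESp n) : ℝ :=
  (∑ j, M (Fin.last n) j.castSucc * x j) + M (Fin.last n) (Fin.last n)

/-- The projective transformation `x ↦ (Ax + b)/(⟨c, x⟩ + δ)` given by the
`(n+1)×(n+1)` matrix `M` with blocks `A, b, c, δ`. -/
def projApp {n : ℕ} (M : Matrix (Fin (n + 1)) (Fin (n + 1)) ℝ) (x : ESp n) : ESp n :=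
  WithLp.toLp 2 (fun i : Fin n => ((∑ j, M i.castSucc j.castSucc * x j) + M i.castSucc (Fin.last n)) / projDen M x)

/-- Two sets are projectively equivalent if some projective transformation (given by an
invertible matrix), defined at every point of the first set, maps it bijectively onto the
second one. -/
def ProjEquiv {n : ℕ} (S T : Set (ESp n)) : Prop :=
  ∃ M : Matrix (Fin (n + 1)) (Fin (n + 1)) ℝ, IsUnit M.det ∧
    (∀ x ∈ S, projDen M x ≠ 0) ∧ Set.BijOn (projApp M) S T

/-- `S` is the vertex set of some face of `P`. -/
def IsVertexSetOfFace {n : ℕ} (P S : Set (ESp n)) : Prop :=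
  ∃ F, IsFaceOf P F ∧ verts F = S

/-- Combinatorial equivalence of two polytopes under a vertex bijection `φ`. -/
def CombEquivUnder {n : ℕ} (P P' : Set (ESp n)) (φ : ESp n → ESp n) : Prop :=
  Set.BijOn φ (verts P) (verts P') ∧
  ∀ S ⊆ verts P, IsVertexSetOfFace P S ↔ IsVertexSetOfFace P' (φ '' S)

/-- A polytope `P ⊆ ℝ^n` is projectively unique if every combinatorial equivalence of `P`
with a polytope `P'` in `ℝ^n` agrees on the vertices with a projective transformation
defined at all points of `P` and mapping `P` onto `P'`. -/
def ProjUniquePolytope {n : ℕ} (P : Set (ESp n)) : Prop :=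
  IsPolytope P ∧ ∀ (P' : Set (ESp n)) (φ : ESp n → ESp n),
    IsPolytope P' → CombEquivUnder P P' φ →
    ∃ M : Matrix (Fin (n + 1)) (Fin (n + 1)) ℝ, IsUnit M.det ∧
      (∀ x ∈ P, projDen M x ≠ 0) ∧ (∀ w ∈ verts P, projApp M w = φ w) ∧
      Set.BijOn (projApp M) P P'

/-- The standard coordinate embedding `ℝ^d ⊆ ℝ^n` for `d ≤ n`. -/
def coordEmbed {d n : ℕ} (_h : d ≤ n) (x : ESp d) : ESp n :=
  WithLp.toLp 2 (fun i : Fin n => if h' : (i : ℕ) < d then x ⟨i, h'⟩ else 0)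

/-- Lawrence equivalence of two point configurations under a bijection `φ`:
for every oriented hyperplane `H` there is an oriented hyperplane `H'` with
`φ(R ∩ H₊) = R' ∩ H'₊` and `φ(R ∩ H₋) = R' ∩ H'₋`. -/
def LawrenceEquivConfig {n : ℕ} (R R' : Set (ESp n)) (φ : ESp n → ESp n) : Prop :=
  Set.BijOn φ R R' ∧
  ∀ (c : ESp n) (a : ℝ), c ≠ 0 →
    ∃ (c' : ESp n) (a' : ℝ), c' ≠ 0 ∧
      φ '' (R ∩ {x | a < ⟪c, x⟫}) = R' ∩ {x | a' < ⟪c', x⟫} ∧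
      φ '' (R ∩ {x | ⟪c, x⟫ < a}) = R' ∩ {x | ⟪c', x⟫ < a'}

/-- A point configuration is projectively unique if every Lawrence equivalence with another
point configuration agrees on it with a projective transformation defined at all its points. -/
def ProjUniqueConfig {n : ℕ} (R : Set (ESp n)) : Prop :=
  R.Finite ∧ ∀ (R' : Set (ESp n)) (φ : ESp n → ESp n),
    LawrenceEquivConfig R R' φ →
    ∃ M : Matrix (Fin (n + 1)) (Fin (n + 1)) ℝ, IsUnit M.det ∧
      (∀ x ∈ R, projDen M x ≠ 0) ∧ ∀ x ∈ R, projApp M x = φ x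

/-- `R` is framed by `Q ⊆ R` if every Lawrence equivalence of `R` with another point
configuration that is the identity on `Q` is the identity on `R`. -/
def FramedBy {n : ℕ} (R Q : Set (ESp n)) : Prop :=
  Q ⊆ R ∧ ∀ (R' : Set (ESp n)) (φ : ESp n → ESp n),
    LawrenceEquivConfig R R' φ → (∀ q ∈ Q, φ q = q) → ∀ x ∈ R, φ x = x

/-- A PP configuration: a polytope together with a finite point set disjoint from it. -/
def IsPPConfig {n : ℕ} (P R : Set (ESp n)) : Prop :=
  IsPolytope P ∧ R.Finite ∧ P ∩ R = ∅

/-- Lawrence equivalence of PP configurations under a bijection `φ` of `F₀(P) ∪ R` with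
`F₀(P') ∪ R'` mapping `F₀(P)` onto `F₀(P')` and `R` onto `R'`. -/
def LawrenceEquivPP {n : ℕ} (P R P' R' : Set (ESp n)) (φ : ESp n → ESp n) : Prop :=
  Set.InjOn φ (verts P ∪ R) ∧ Set.BijOn φ (verts P) (verts P') ∧ Set.BijOn φ R R' ∧
  ∀ (c : ESp n) (a : ℝ), c ≠ 0 → (∀ x ∈ P, ⟪c, x⟫ ≤ a) →
    ∃ (c' : ESp n) (a' : ℝ), c' ≠ 0 ∧ (∀ x ∈ P', ⟪c', x⟫ ≤ a') ∧
      φ '' (verts P ∩ {x | ⟪c, x⟫ < a}) = verts P' ∩ {x | ⟪c', x⟫ < a'} ∧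
      φ '' (R ∩ {x | a < ⟪c, x⟫}) = R' ∩ {x | a' < ⟪c', x⟫} ∧
      φ '' (R ∩ {x | ⟪c, x⟫ < a}) = R' ∩ {x | ⟪c', x⟫ < a'}

/-- A PP configuration `(P, R)` is projectively unique if every Lawrence equivalence with
another PP configuration agrees on `F₀(P) ∪ R` with a projective transformation defined at
all points of `F₀(P) ∪ R`. -/
def ProjUniquePP {n : ℕ} (P R : Set (ESp n)) : Prop :=
  IsPPConfig P R ∧ ∀ (P' R' : Set (ESp n)) (φ : ESp n → ESp n),
    IsPPConfig P' R' → LawrenceEquivPP P R P' R' φ →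
    ∃ M : Matrix (Fin (n + 1)) (Fin (n + 1)) ℝ, IsUnit M.det ∧
      (∀ x ∈ verts P ∪ R, projDen M x ≠ 0) ∧ ∀ x ∈ verts P ∪ R, projApp M x = φ x

/-- `(P, R)` is framed by `Q ⊆ F₀(P) ∪ R` if every Lawrence equivalence of `(P, R)` with
another PP configuration that is the identity on `Q` is the identity. -/
def FramedPP {n : ℕ} (P R Q : Set (ESp n)) : Prop :=
  Q ⊆ verts P ∪ R ∧ ∀ (P' R' : Set (ESp n)) (φ : ESp n → ESp n),
    IsPPConfig P' R' → LawrenceEquivPP P R P' R' φ → (∀ q ∈ Q, φ q = q) →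
    ∀ x ∈ verts P ∪ R, φ x = x

/-- A polytope `P` is framed by `Q ⊆ F₀(P)` if `(P, ∅)` is framed by `Q`. -/
def PolytopeFramedBy {n : ℕ} (P Q : Set (ESp n)) : Prop := FramedPP P ∅ Q

/-- A weak projective triple `(P, Q, R)` in `ℝ^d`. -/
def WeakProjTriple {d : ℕ} (P Q R : Set (ESp d)) : Prop :=
  IsPolytope P ∧ Q ⊆ verts P ∧ R.Finite ∧
  ProjUniqueConfig (Q ∪ R) ∧
  PolytopeFramedBy P Q ∧
  ∃ S ⊆ R, ∃ (c : ESp d) (a : ℝ), c ≠ 0 ∧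
    (affineSpan ℝ S : Set (ESp d)) = {x | ⟪c, x⟫ = a} ∧
    {x | ⟪c, x⟫ = a} ∩ P = ∅

/-- A subpolytope of `S`: a convex hull of a subset of the vertices of `S`. -/
def IsSubpolytopeOf {n : ℕ} (P S : Set (ESp n)) : Prop :=
  ∃ V ⊆ verts S, P = convexHull ℝ V

/-- Stacked `d`-polytopes: `d`-simplices, closed under stacking a point `v` beyond a facet
`F` (i.e. `v` and the interior of `S` lie strictly on opposite sides of the affine hull of
`F`, and strictly on the same side of the affine hull of every other facet of `S`). -/
inductive IsStackedPolytope (d : ℕ) : Set (ESp d) → Prop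
  | simplex (V : Finset (ESp d)) (hcard : V.card = d + 1)
      (hind : AffineIndependent ℝ (Subtype.val : {x : ESp d // x ∈ V} → ESp d)) :
      IsStackedPolytope d (convexHull ℝ (V : Set (ESp d)))
  | stack (S F : Set (ESp d)) (v : ESp d) (hS : IsStackedPolytope d S)
      (hF : IsFaceOf S F) (hdim : polyDim F + 1 = d)
      (hbeyond : ∀ F', IsFaceOf S F' → polyDim F' + 1 = d →
        ∃ (c : ESp d) (a : ℝ), c ≠ 0 ∧
          (affineSpan ℝ F' : Set (ESp d)) = {x | ⟪c, x⟫ = a} ∧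
          interior S ⊆ {x | ⟪c, x⟫ < a} ∧
          (F' = F → a < ⟪c, v⟫) ∧ (F' ≠ F → ⟪c, v⟫ < a)) :
      IsStackedPolytope d (convexHull ℝ (S ∪ {v}))

/-- The first standard basis vector `e₁` of `ℝ²`. -/
def e1 : ESp 2 := EuclideanSpace.single 0 1

/-- The point configuration `Q² + 𝟏 = {0, 1, 2}²` in `ℝ²`. -/
def Qsq : Set (ESp 2) := {p | ∀ i, p i = 0 ∨ p i = 1 ∨ p i = 2}

/-- A functional arrangement for a function `f : ℝ^ι → ℝ`. -/
def IsFunctionalArrangement {ι : Type} [Fintype ι]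
    (f : (ι → ℝ) → ℝ) (F : (ι → ℝ) → Set (ESp 2)) : Prop :=
  ∀ x : ι → ℝ,
    (F x).Finite ∧
    (f x) • e1 ∈ F x ∧
    (∀ i, (x i) • e1 ∈ F x) ∧
    Qsq ⊆ F x ∧
    FramedBy (F x) ({p | ∃ i, p = (x i) • e1} ∪ Qsq) ∧
    ∀ (R' : Set (ESp 2)) (φ : ESp 2 → ESp 2),
      LawrenceEquivConfig (F x) R' φ → (∀ q ∈ Qsq, φ q = q) →
      φ ((f x) • e1) = (f x) • e1 →
      ∃ y : ι → ℝ, f y = f x ∧ ∀ i, φ ((x i) • e1) = (y i) • e1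
def pt3 (a b c : ℝ) : ESp 3 := (WithLp.equiv 2 (Fin 3 → ℝ)).symm ![a, b, c]
@[simp] lemma pt3_0 (a b c : ℝ) : pt3 a b c 0 = a := rfl
@[simp] lemma pt3_1 (a b c : ℝ) : pt3 a b c 1 = b := rfl
@[simp] lemma pt3_2 (a b c : ℝ) : pt3 a b c 2 = c := rfl

lemma inner3 (c y : ESp 3) : ⟪c, y⟫ = c 0 * y 0 + c 1 * y 1 + c 2 * y 2 := by
  simp [PiLp.inner_apply, Fin.sum_univ_three]; ring

lemma esp3_ext {u v : ESp 3} (h0 : u 0 = v 0) (h1 : u 1 = v 1) (h2 : u 2 = v 2) : u = v := by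
  ext i; fin_cases i <;> assumption

lemma esp3_zero {c : ESp 3} (h0 : c 0 = 0) (h1 : c 1 = 0) (h2 : c 2 = 0) : c = 0 :=
  esp3_ext h0 h1 h2

lemma dual3 {R R' : Set (ESp 3)} {φ : ESp 3 → ESp 3}
    (hL : LawrenceEquivConfig R R' φ) (c : ESp 3) (a : ℝ) (hc : c ≠ 0) :
    ∃ c' : ESp 3, ∃ a' : ℝ, c' ≠ 0 ∧ ∀ y ∈ R, ⟪c, y⟫ = a → ⟪c', φ y⟫ = a' := by
  obtain ⟨hbij, h⟩ := hL
  obtain ⟨c', a', hc', hpos, hneg⟩ := h c a hc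
  refine ⟨c', a', hc', fun y hy hcy => ?_⟩
  rcases lt_trichotomy ⟪c', φ y⟫ a' with h1 | h1 | h1
  · have hm : φ y ∈ R' ∩ {x | ⟪c', x⟫ < a'} := ⟨hbij.mapsTo hy, h1⟩
    rw [← hneg] at hm
    obtain ⟨z, ⟨hz1, hz2⟩, hz3⟩ := hm
    have hzy := hbij.injOn hz1 hy hz3
    subst hzy
    exact absurd hcy (ne_of_lt hz2)
  · exact h1
  · have hm : φ y ∈ R' ∩ {x | a' < ⟪c', x⟫} := ⟨hbij.mapsTo hy, h1⟩
    rw [← hpos] at hm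
    obtain ⟨z, ⟨hz1, hz2⟩, hz3⟩ := hm
    have hzy := hbij.injOn hz1 hy hz3
    subst hzy
    exact absurd hcy (ne_of_gt hz2)

lemma pin3 {R R' : Set (ESp 3)} {φ : ESp 3 → ESp 3}
    (hL : LawrenceEquivConfig R R' φ) {x : ESp 3} (hx : x ∈ R)
    (c : ESp 3) (a : ℝ) (hc : c ≠ 0)
    (p q r : ESp 3) (hp : p ∈ R) (hq : q ∈ R) (hr : r ∈ R)
    (hφp : φ p = p) (hφq : φ q = q) (hφr : φ r = r)
    (hcp : ⟪c, p⟫ = a) (hcq : ⟪c, q⟫ = a) (hcr : ⟪c, r⟫ = a)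
    (hcx : ⟪c, x⟫ = a)
    (key : ∀ (c' : ESp 3) (a' : ℝ), c' ≠ 0 → ⟪c', p⟫ = a' → ⟪c', q⟫ = a' →
      ⟪c', r⟫ = a' → ⟪c', φ x⟫ = a' → ⟪c, φ x⟫ = a) :
    ⟪c, φ x⟫ = a := by
  obtain ⟨c', a', hc', hall⟩ := dual3 hL c a hc
  exact key c' a' hc' (hφp ▸ hall p hp hcp) (hφq ▸ hall q hq hcq)
    (hφr ▸ hall r hr hcr) (hall x hx hcx)

/-- `Q³ = {-1, 0, 1}³` is framed by the vertices of the cube `[-1, 1]³` together with the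
origin. -/
theorem cubeLattice_three_framed :
    FramedBy {v : ESp 3 | ∀ i, v i = -1 ∨ v i = 0 ∨ v i = 1}
      ({v : ESp 3 | ∀ i, v i = -1 ∨ v i = 1} ∪ {0}) := by
  set Rc : Set (ESp 3) := {v : ESp 3 | ∀ i, v i = -1 ∨ v i = 0 ∨ v i = 1} with hRc
  have memR : ∀ a b c : ℝ, (a = -1 ∨ a = 0 ∨ a = 1) → (b = -1 ∨ b = 0 ∨ b = 1) →
      (c = -1 ∨ c = 0 ∨ c = 1) → pt3 a b c ∈ Rc := by
    intro a b c ha hb hc i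
    fin_cases i
    · exact ha
    · exact hb
    · exact hc
  have h0R : (0 : ESp 3) ∈ Rc := fun i => Or.inr (Or.inl rfl)
  constructor
  · rintro v (hv | hv)
    · exact fun i => (hv i).imp id Or.inr
    · have hv0 : v = 0 := hv
      subst hv0; exact h0R
  · intro R' φ hL hW
    have hvW : ∀ a b c : ℝ, (a = -1 ∨ a = 1) → (b = -1 ∨ b = 1) → (c = -1 ∨ c = 1) →
        φ (pt3 a b c) = pt3 a b c := by
      intro a b c ha hb hc
      refine hW _ (Set.mem_union_left _ ?_)
      intro i; fin_cases i
      · exact ha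
      · exact hb
      · exact hc
    have h0fix : φ 0 = 0 := hW 0 (Set.mem_union_right _ (Set.mem_singleton _))
    have hvR : ∀ a b c : ℝ, (a = -1 ∨ a = 1) → (b = -1 ∨ b = 1) → (c = -1 ∨ c = 1) →
        pt3 a b c ∈ Rc :=
      fun a b c ha hb hc => memR a b c (ha.imp id Or.inr) (hb.imp id Or.inr) (hc.imp id Or.inr)
    -- Claim A: planes x_i = s through vertices pin coordinate i for x with x i = s, s = ±1
    have A0 : ∀ s : ℝ, (s = -1 ∨ s = 1) → ∀ x ∈ Rc, x 0 = s → φ x 0 = s := by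
      intro s hs x hx hx0
      have hcne : (pt3 1 0 0 : ESp 3) ≠ 0 := by
        intro h; simpa using congrArg (fun v : ESp 3 => v 0) h
      have h := pin3 hL hx (pt3 1 0 0) s hcne (pt3 s 1 1) (pt3 s 1 (-1)) (pt3 s (-1) 1)
        (hvR s 1 1 hs (by norm_num) (by norm_num))
        (hvR s 1 (-1) hs (by norm_num) (by norm_num))
        (hvR s (-1) 1 hs (by norm_num) (by norm_num))
        (hvW s 1 1 hs (by norm_num) (by norm_num))
        (hvW s 1 (-1) hs (by norm_num) (by norm_num))
        (hvW s (-1) 1 hs (by norm_num) (by norm_num))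
        (by rw [inner3]; simp)
        (by rw [inner3]; simp)
        (by rw [inner3]; simp)
        (by rw [inner3]; simpa using hx0)
        (by
          intro c' a' hc' h1 h2 h3 hy
          rw [inner3] at h1 h2 h3 hy ⊢
          simp only [pt3_0, pt3_1, pt3_2] at h1 h2 h3 ⊢
          have e1 : c' 1 = 0 := by linarith
          have e2 : c' 2 = 0 := by linarith
          rw [e1, e2] at hy h1
          simp only [zero_mul, add_zero, mul_one] at hy h1
          have hc0 : c' 0 ≠ 0 := fun h => hc' (esp3_zero h e1 e2)
          have hval := mul_left_cancel₀ hc0 (hy.trans h1.symm)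
          linarith)
      rw [inner3] at h
      simpa using h
    have A1 : ∀ s : ℝ, (s = -1 ∨ s = 1) → ∀ x ∈ Rc, x 1 = s → φ x 1 = s := by
      intro s hs x hx hx1
      have hcne : (pt3 0 1 0 : ESp 3) ≠ 0 := by
        intro h; simpa using congrArg (fun v : ESp 3 => v 1) h
      have h := pin3 hL hx (pt3 0 1 0) s hcne (pt3 1 s 1) (pt3 1 s (-1)) (pt3 (-1) s 1)
        (hvR 1 s 1 (by norm_num) hs (by norm_num))
        (hvR 1 s (-1) (by norm_num) hs (by norm_num))
        (hvR (-1) s 1 (by norm_num) hs (by norm_num))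
        (hvW 1 s 1 (by norm_num) hs (by norm_num))
        (hvW 1 s (-1) (by norm_num) hs (by norm_num))
        (hvW (-1) s 1 (by norm_num) hs (by norm_num))
        (by rw [inner3]; simp)
        (by rw [inner3]; simp)
        (by rw [inner3]; simp)
        (by rw [inner3]; simpa using hx1)
        (by
          intro c' a' hc' h1 h2 h3 hy
          rw [inner3] at h1 h2 h3 hy ⊢
          simp only [pt3_0, pt3_1, pt3_2] at h1 h2 h3 ⊢
          have e0 : c' 0 = 0 := by linarith
          have e2 : c' 2 = 0 := by linarith
          rw [e0, e2] at hy h1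
          simp only [zero_mul, add_zero, zero_add, mul_one] at hy h1
          have hc1 : c' 1 ≠ 0 := fun h => hc' (esp3_zero e0 h e2)
          have hval := mul_left_cancel₀ hc1 (hy.trans h1.symm)
          linarith)
      rw [inner3] at h
      simpa using h
    have A2 : ∀ s : ℝ, (s = -1 ∨ s = 1) → ∀ x ∈ Rc, x 2 = s → φ x 2 = s := by
      intro s hs x hx hx2
      have hcne : (pt3 0 0 1 : ESp 3) ≠ 0 := by
        intro h; simpa using congrArg (fun v : ESp 3 => v 2) h
      have h := pin3 hL hx (pt3 0 0 1) s hcne (pt3 1 1 s) (pt3 1 (-1) s) (pt3 (-1) 1 s)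
        (hvR 1 1 s (by norm_num) (by norm_num) hs)
        (hvR 1 (-1) s (by norm_num) (by norm_num) hs)
        (hvR (-1) 1 s (by norm_num) (by norm_num) hs)
        (hvW 1 1 s (by norm_num) (by norm_num) hs)
        (hvW 1 (-1) s (by norm_num) (by norm_num) hs)
        (hvW (-1) 1 s (by norm_num) (by norm_num) hs)
        (by rw [inner3]; simp)
        (by rw [inner3]; simp)
        (by rw [inner3]; simp)
        (by rw [inner3]; simpa using hx2)
        (by
          intro c' a' hc' h1 h2 h3 hy
          rw [inner3] at h1 h2 h3 hy ⊢
          simp only [pt3_0, pt3_1, pt3_2] at h1 h2 h3 ⊢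
          have e0 : c' 0 = 0 := by linarith
          have e1 : c' 1 = 0 := by linarith
          rw [e0, e1] at hy h1
          simp only [zero_mul, add_zero, zero_add, mul_one] at hy h1
          have hc2 : c' 2 ≠ 0 := fun h => hc' (esp3_zero e0 e1 h)
          have hval := mul_left_cancel₀ hc2 (hy.trans h1.symm)
          linarith)
      rw [inner3] at h
      simpa using h
    -- Claim D: planes e*x_j + x_k = 0 through 0 and two vertices
    have D12 : ∀ e : ℝ, (e = -1 ∨ e = 1) → ∀ x ∈ Rc, e * x 1 + x 2 = 0 →
        e * φ x 1 + φ x 2 = 0 := by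
      intro e he x hx hx12
      have hcne : (pt3 0 e 1 : ESp 3) ≠ 0 := by
        intro h; simpa using congrArg (fun v : ESp 3 => v 2) h
      have h := pin3 hL hx (pt3 0 e 1) 0 hcne 0 (pt3 1 1 (-e)) (pt3 (-1) 1 (-e))
        h0R
        (hvR 1 1 (-e) (by norm_num) (by norm_num) (by rcases he with rfl | rfl <;> norm_num))
        (hvR (-1) 1 (-e) (by norm_num) (by norm_num) (by rcases he with rfl | rfl <;> norm_num))
        h0fix
        (hvW 1 1 (-e) (by norm_num) (by norm_num) (by rcases he with rfl | rfl <;> norm_num))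
        (hvW (-1) 1 (-e) (by norm_num) (by norm_num) (by rcases he with rfl | rfl <;> norm_num))
        (inner_zero_right _)
        (by rw [inner3]; simp only [pt3_0, pt3_1, pt3_2]; ring)
        (by rw [inner3]; simp only [pt3_0, pt3_1, pt3_2]; ring)
        (by rw [inner3]; simp only [pt3_0, pt3_1, pt3_2]; linarith)
        (by
          intro c' a' hc' h1 h2 h3 hy
          rw [inner_zero_right] at h1
          rw [inner3] at h2 h3 hy ⊢
          simp only [pt3_0, pt3_1, pt3_2] at h2 h3 ⊢
          have e0 : c' 0 = 0 := by linarith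
          have ee : c' 1 = c' 2 * e := by nlinarith [h2, h3, h1]
          have hc2 : c' 2 ≠ 0 := by
            intro h
            refine hc' (esp3_zero e0 ?_ h)
            rw [h] at ee; simpa using ee
          have hmul : c' 2 * (e * φ x 1 + φ x 2) = c' 2 * 0 := by
            rw [e0, ee] at hy
            linear_combination hy - h1
          have hval := mul_left_cancel₀ hc2 hmul
          linarith)
      rw [inner3] at h
      simp only [pt3_0, pt3_1, pt3_2] at h
      linarith
    have D02 : ∀ e : ℝ, (e = -1 ∨ e = 1) → ∀ x ∈ Rc, e * x 0 + x 2 = 0 →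
        e * φ x 0 + φ x 2 = 0 := by
      intro e he x hx hx02
      have hcne : (pt3 e 0 1 : ESp 3) ≠ 0 := by
        intro h; simpa using congrArg (fun v : ESp 3 => v 2) h
      have h := pin3 hL hx (pt3 e 0 1) 0 hcne 0 (pt3 1 1 (-e)) (pt3 1 (-1) (-e))
        h0R
        (hvR 1 1 (-e) (by norm_num) (by norm_num) (by rcases he with rfl | rfl <;> norm_num))
        (hvR 1 (-1) (-e) (by norm_num) (by norm_num) (by rcases he with rfl | rfl <;> norm_num))
        h0fix
        (hvW 1 1 (-e) (by norm_num) (by norm_num) (by rcases he with rfl | rfl <;> norm_num))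
        (hvW 1 (-1) (-e) (by norm_num) (by norm_num) (by rcases he with rfl | rfl <;> norm_num))
        (inner_zero_right _)
        (by rw [inner3]; simp only [pt3_0, pt3_1, pt3_2]; ring)
        (by rw [inner3]; simp only [pt3_0, pt3_1, pt3_2]; ring)
        (by rw [inner3]; simp only [pt3_0, pt3_1, pt3_2]; linarith)
        (by
          intro c' a' hc' h1 h2 h3 hy
          rw [inner_zero_right] at h1
          rw [inner3] at h2 h3 hy ⊢
          simp only [pt3_0, pt3_1, pt3_2] at h2 h3 ⊢
          have e1 : c' 1 = 0 := by linarith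
          have ee : c' 0 = c' 2 * e := by nlinarith [h2, h3, h1]
          have hc2 : c' 2 ≠ 0 := by
            intro h
            refine hc' (esp3_zero ?_ e1 h)
            rw [h] at ee; simpa using ee
          have hmul : c' 2 * (e * φ x 0 + φ x 2) = c' 2 * 0 := by
            rw [e1, ee] at hy
            linear_combination hy - h1
          have hval := mul_left_cancel₀ hc2 hmul
          linarith)
      rw [inner3] at h
      simp only [pt3_0, pt3_1, pt3_2] at h
      linarith
    have D01 : ∀ e : ℝ, (e = -1 ∨ e = 1) → ∀ x ∈ Rc, e * x 0 + x 1 = 0 →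
        e * φ x 0 + φ x 1 = 0 := by
      intro e he x hx hx01
      have hcne : (pt3 e 1 0 : ESp 3) ≠ 0 := by
        intro h; simpa using congrArg (fun v : ESp 3 => v 1) h
      have h := pin3 hL hx (pt3 e 1 0) 0 hcne 0 (pt3 1 (-e) 1) (pt3 1 (-e) (-1))
        h0R
        (hvR 1 (-e) 1 (by norm_num) (by rcases he with rfl | rfl <;> norm_num) (by norm_num))
        (hvR 1 (-e) (-1) (by norm_num) (by rcases he with rfl | rfl <;> norm_num) (by norm_num))
        h0fix
        (hvW 1 (-e) 1 (by norm_num) (by rcases he with rfl | rfl <;> norm_num) (by norm_num))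
        (hvW 1 (-e) (-1) (by norm_num) (by rcases he with rfl | rfl <;> norm_num) (by norm_num))
        (inner_zero_right _)
        (by rw [inner3]; simp only [pt3_0, pt3_1, pt3_2]; ring)
        (by rw [inner3]; simp only [pt3_0, pt3_1, pt3_2]; ring)
        (by rw [inner3]; simp only [pt3_0, pt3_1, pt3_2]; linarith)
        (by
          intro c' a' hc' h1 h2 h3 hy
          rw [inner_zero_right] at h1
          rw [inner3] at h2 h3 hy ⊢
          simp only [pt3_0, pt3_1, pt3_2] at h2 h3 ⊢
          have e2 : c' 2 = 0 := by linarith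
          have ee : c' 0 = c' 1 * e := by nlinarith [h2, h3, h1]
          have hc1 : c' 1 ≠ 0 := by
            intro h
            refine hc' (esp3_zero ?_ h e2)
            rw [h] at ee; simpa using ee
          have hmul : c' 1 * (e * φ x 0 + φ x 1) = c' 1 * 0 := by
            rw [e2, ee] at hy
            linear_combination hy - h1
          have hval := mul_left_cancel₀ hc1 hmul
          linarith)
      rw [inner3] at h
      simp only [pt3_0, pt3_1, pt3_2] at h
      linarith
    -- Face centers are fixed
    have hface0 : ∀ s : ℝ, (s = -1 ∨ s = 1) → φ (pt3 s 0 0) = pt3 s 0 0 := by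
      intro s hs
      have hm : pt3 s 0 0 ∈ Rc :=
        memR s 0 0 (hs.imp id Or.inr) (Or.inr (Or.inl rfl)) (Or.inr (Or.inl rfl))
      have h1 := D12 1 (Or.inr rfl) _ hm (by simp)
      have h2 := D12 (-1) (Or.inl rfl) _ hm (by simp)
      have h0 := A0 s hs _ hm (pt3_0 s 0 0)
      exact esp3_ext h0 (by show _ = (0 : ℝ); linarith) (by show _ = (0 : ℝ); linarith)
    have hface1 : ∀ s : ℝ, (s = -1 ∨ s = 1) → φ (pt3 0 s 0) = pt3 0 s 0 := by
      intro s hs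
      have hm : pt3 0 s 0 ∈ Rc :=
        memR 0 s 0 (Or.inr (Or.inl rfl)) (hs.imp id Or.inr) (Or.inr (Or.inl rfl))
      have h1 := D02 1 (Or.inr rfl) _ hm (by simp)
      have h2 := D02 (-1) (Or.inl rfl) _ hm (by simp)
      have h0 := A1 s hs _ hm (pt3_1 0 s 0)
      exact esp3_ext (by show _ = (0 : ℝ); linarith) h0 (by show _ = (0 : ℝ); linarith)
    have hface2 : ∀ s : ℝ, (s = -1 ∨ s = 1) → φ (pt3 0 0 s) = pt3 0 0 s := by
      intro s hs
      have hm : pt3 0 0 s ∈ Rc :=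
        memR 0 0 s (Or.inr (Or.inl rfl)) (Or.inr (Or.inl rfl)) (hs.imp id Or.inr)
      have h1 := D01 1 (Or.inr rfl) _ hm (by simp)
      have h2 := D01 (-1) (Or.inl rfl) _ hm (by simp)
      have h0 := A2 s hs _ hm (pt3_2 0 0 s)
      exact esp3_ext (by show _ = (0 : ℝ); linarith) (by show _ = (0 : ℝ); linarith) h0
    -- Claim C: planes x_i = 0 through 0 and two face centers
    have C0 : ∀ x ∈ Rc, x 0 = 0 → φ x 0 = 0 := by
      intro x hx hx0
      have hcne : (pt3 1 0 0 : ESp 3) ≠ 0 := by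
        intro h; simpa using congrArg (fun v : ESp 3 => v 0) h
      have h := pin3 hL hx (pt3 1 0 0) 0 hcne 0 (pt3 0 1 0) (pt3 0 0 1)
        h0R
        (memR 0 1 0 (by norm_num) (by norm_num) (by norm_num))
        (memR 0 0 1 (by norm_num) (by norm_num) (by norm_num))
        h0fix
        (hface1 1 (Or.inr rfl))
        (hface2 1 (Or.inr rfl))
        (inner_zero_right _)
        (by rw [inner3]; simp)
        (by rw [inner3]; simp)
        (by rw [inner3]; simpa using hx0)
        (by
          intro c' a' hc' h1 h2 h3 hy
          rw [inner_zero_right] at h1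
          rw [inner3] at h2 h3 hy ⊢
          simp only [pt3_0, pt3_1, pt3_2] at h2 h3 ⊢
          have e1 : c' 1 = 0 := by linarith
          have e2 : c' 2 = 0 := by linarith
          rw [e1, e2] at hy
          simp only [zero_mul, add_zero, mul_one] at hy
          have hc0 : c' 0 ≠ 0 := fun h => hc' (esp3_zero h e1 e2)
          have hmul : c' 0 * φ x 0 = c' 0 * 0 := by linarith
          have hval := mul_left_cancel₀ hc0 hmul
          linarith)
      rw [inner3] at h
      simpa using h
    have C1 : ∀ x ∈ Rc, x 1 = 0 → φ x 1 = 0 := by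
      intro x hx hx1
      have hcne : (pt3 0 1 0 : ESp 3) ≠ 0 := by
        intro h; simpa using congrArg (fun v : ESp 3 => v 1) h
      have h := pin3 hL hx (pt3 0 1 0) 0 hcne 0 (pt3 1 0 0) (pt3 0 0 1)
        h0R
        (memR 1 0 0 (by norm_num) (by norm_num) (by norm_num))
        (memR 0 0 1 (by norm_num) (by norm_num) (by norm_num))
        h0fix
        (hface0 1 (Or.inr rfl))
        (hface2 1 (Or.inr rfl))
        (inner_zero_right _)
        (by rw [inner3]; simp)
        (by rw [inner3]; simp)
        (by rw [inner3]; simpa using hx1)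
        (by
          intro c' a' hc' h1 h2 h3 hy
          rw [inner_zero_right] at h1
          rw [inner3] at h2 h3 hy ⊢
          simp only [pt3_0, pt3_1, pt3_2] at h2 h3 ⊢
          have e0 : c' 0 = 0 := by linarith
          have e2 : c' 2 = 0 := by linarith
          rw [e0, e2] at hy
          simp only [zero_mul, add_zero, zero_add, mul_one] at hy
          have hc1 : c' 1 ≠ 0 := fun h => hc' (esp3_zero e0 h e2)
          have hmul : c' 1 * φ x 1 = c' 1 * 0 := by linarith
          have hval := mul_left_cancel₀ hc1 hmul
          linarith)
      rw [inner3] at h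
      simpa using h
    have C2 : ∀ x ∈ Rc, x 2 = 0 → φ x 2 = 0 := by
      intro x hx hx2
      have hcne : (pt3 0 0 1 : ESp 3) ≠ 0 := by
        intro h; simpa using congrArg (fun v : ESp 3 => v 2) h
      have h := pin3 hL hx (pt3 0 0 1) 0 hcne 0 (pt3 1 0 0) (pt3 0 1 0)
        h0R
        (memR 1 0 0 (by norm_num) (by norm_num) (by norm_num))
        (memR 0 1 0 (by norm_num) (by norm_num) (by norm_num))
        h0fix
        (hface0 1 (Or.inr rfl))
        (hface1 1 (Or.inr rfl))
        (inner_zero_right _)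
        (by rw [inner3]; simp)
        (by rw [inner3]; simp)
        (by rw [inner3]; simpa using hx2)
        (by
          intro c' a' hc' h1 h2 h3 hy
          rw [inner_zero_right] at h1
          rw [inner3] at h2 h3 hy ⊢
          simp only [pt3_0, pt3_1, pt3_2] at h2 h3 ⊢
          have e0 : c' 0 = 0 := by linarith
          have e1 : c' 1 = 0 := by linarith
          rw [e0, e1] at hy
          simp only [zero_mul, add_zero, zero_add, mul_one] at hy
          have hc2 : c' 2 ≠ 0 := fun h => hc' (esp3_zero e0 e1 h)
          have hmul : c' 2 * φ x 2 = c' 2 * 0 := by linarith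
          have hval := mul_left_cancel₀ hc2 hmul
          linarith)
      rw [inner3] at h
      simpa using h
    -- Conclusion
    intro x hx
    refine esp3_ext ?_ ?_ ?_
    · rcases hx 0 with h | h | h
      · rw [h]; exact A0 (-1) (Or.inl rfl) x hx h
      · rw [h]; exact C0 x hx h
      · rw [h]; exact A0 1 (Or.inr rfl) x hx h
    · rcases hx 1 with h | h | h
      · rw [h]; exact A1 (-1) (Or.inl rfl) x hx h
      · rw [h]; exact C1 x hx h
      · rw [h]; exact A1 1 (Or.inr rfl) x hx h
    · rcases hx 2 with h | h | h
      · rw [h]; exact A2 (-1) (Or.inl rfl) x hx h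
      · rw [h]; exact C2 x hx h
      · rw [h]; exact A2 1 (Or.inr rfl) x hx h
end
end

section
/- Let d ≥ 3 and let p = (p₁, …, p_d) ∈ ℝ^d have all coordinates strictly positive. Then the point configuration G(p) = {(p₁x₁/2, …, p_d x_d/2) : x ∈ {0, 1, 2}^d} in ℝ^d contains p and is framed by the set L(p) = {0, p₁e₁, …, p_d e_d, (p₁/2)e₁, …, (p_d/2)e_d}. -/
open scoped RealInnerProductSpace

noncomputable section

namespace SC
variable {d : ℕ}

lemma inner_expand (v w : ESp d) : ⟪v, w⟫ = ∑ i, v i * w i := by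
  rw [PiLp.inner_apply]; simp [RCLike.inner_apply]
  exact Finset.sum_congr rfl (fun _ _ => mul_comm _ _)

def cvec (f : Fin d → ℝ) : ESp d := (WithLp.equiv 2 _).symm f

@[simp] lemma cvec_apply (f : Fin d → ℝ) (l : Fin d) : cvec f l = f l := rfl

lemma zero_apply' (l : Fin d) : (0 : ESp d) l = 0 := rfl

lemma cvec_ne (f : Fin d → ℝ) (i : Fin d) (h : f i ≠ 0) : cvec f ≠ 0 := by
  intro hc; exact h (by rw [← cvec_apply f i, hc]; rfl)

lemma inner_cvec (f : Fin d → ℝ) (w : ESp d) : ⟪cvec f, w⟫ = ∑ m, f m * w m := by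
  rw [inner_expand]; rfl

lemma esp_ext (v w : ESp d) (h : ∀ i, v i = w i) : v = w := PiLp.ext h

lemma exists_third (hd : 3 ≤ d) (i j : Fin d) : ∃ k : Fin d, k ≠ i ∧ k ≠ j := by
  by_contra h
  push_neg at h
  have hsub : (Finset.univ : Finset (Fin d)) ⊆ {i, j} := by
    intro k _
    by_cases hk : k = i
    · simp [hk]
    · simp [h k hk]
  have h1 := Finset.card_le_card hsub
  have h2 : ({i, j} : Finset (Fin d)).card ≤ 2 :=
    le_trans (Finset.card_insert_le i {j}) (by simp)
  rw [Finset.card_univ, Fintype.card_fin] at h1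
  omega

lemma sum_support1 (F : Fin d → ℝ) (i : Fin d) (h : ∀ m, m ≠ i → F m = 0) :
    ∑ m, F m = F i := Fintype.sum_eq_single i h

lemma sum_support2 (F : Fin d → ℝ) (i j : Fin d) (hij : i ≠ j)
    (h : ∀ m, m ≠ i → m ≠ j → F m = 0) : ∑ m, F m = F i + F j :=
  Fintype.sum_eq_add i j hij (fun c hc => h c hc.1 hc.2)

lemma sum_support3 (F : Fin d → ℝ) (i j k : Fin d) (hij : i ≠ j) (hik : i ≠ k) (hjk : j ≠ k)
    (h : ∀ m, m ≠ i → m ≠ j → m ≠ k → F m = 0) : ∑ m, F m = F i + F j + F k := by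
  classical
  have hs : ∑ m ∈ ({i, j, k} : Finset (Fin d)), F m = ∑ m, F m := by
    apply Finset.sum_subset (Finset.subset_univ _)
    intro m _ hm
    simp only [Finset.mem_insert, Finset.mem_singleton] at hm
    push_neg at hm
    exact h m hm.1 hm.2.1 hm.2.2
  rw [← hs]
  rw [Finset.sum_insert (by simp [hij, hik]), Finset.sum_insert (by simp [hjk]),
    Finset.sum_singleton, add_assoc]

def pat1 (i : Fin d) : Fin d → ℝ := fun m => if m = i then 1 else 0
def pat2 (i : Fin d) : Fin d → ℝ := fun m => if m = i then 2 else 0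
def patA (i j : Fin d) : Fin d → ℝ := fun m => if m = i then 1 else if m = j then 1 else 0
def patB (i j : Fin d) : Fin d → ℝ := fun m => if m = i then 2 else if m = j then 1 else 0
def patT (i j k : Fin d) : Fin d → ℝ := fun m => if m = i ∨ m = j ∨ m = k then 1 else 0

lemma pat1_range (i : Fin d) : ∀ m, pat1 i m = 0 ∨ pat1 i m = 1 ∨ pat1 i m = 2 := by
  intro m; by_cases h : m = i <;> simp [pat1, h]
lemma pat2_range (i : Fin d) : ∀ m, pat2 i m = 0 ∨ pat2 i m = 1 ∨ pat2 i m = 2 := by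
  intro m; by_cases h : m = i <;> simp [pat2, h]
lemma patA_range (i j : Fin d) : ∀ m, patA i j m = 0 ∨ patA i j m = 1 ∨ patA i j m = 2 := by
  intro m; unfold patA
  split
  · norm_num
  split
  · norm_num
  · norm_num
lemma patB_range (i j : Fin d) : ∀ m, patB i j m = 0 ∨ patB i j m = 1 ∨ patB i j m = 2 := by
  intro m; unfold patB
  split
  · norm_num
  split
  · norm_num
  · norm_num
lemma patT_range (i j k : Fin d) : ∀ m, patT i j k m = 0 ∨ patT i j k m = 1 ∨ patT i j k m = 2 := by
  intro m; unfold patT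
  split
  · norm_num
  · norm_num

lemma pat1_eq0 {k n : Fin d} (hn : n ≠ k) : pat1 k n = 0 := if_neg hn
lemma pat2_eq0 {k n : Fin d} (hn : n ≠ k) : pat2 k n = 0 := if_neg hn
lemma patA_eq0 {i j n : Fin d} (h1 : n ≠ i) (h2 : n ≠ j) : patA i j n = 0 := by
  unfold patA; rw [if_neg h1, if_neg h2]
lemma patB_eq0 {i j n : Fin d} (h1 : n ≠ i) (h2 : n ≠ j) : patB i j n = 0 := by
  unfold patB; rw [if_neg h1, if_neg h2]
lemma patT_eq0 {i j k n : Fin d} (h1 : n ≠ i) (h2 : n ≠ j) (h3 : n ≠ k) : patT i j k n = 0 := by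
  unfold patT; rw [if_neg (by tauto : ¬(n = i ∨ n = j ∨ n = k))]

lemma patA_comm (i j : Fin d) (hij : i ≠ j) : patA i j = patA j i := by
  funext m
  unfold patA
  rcases eq_or_ne m i with h | h <;> rcases eq_or_ne m j with h' | h'
  · exact absurd (h.symm.trans h') hij
  · rw [if_pos h, if_neg h', if_pos h]
  · rw [if_neg h, if_pos h', if_pos h']
  · rw [if_neg h, if_neg h', if_neg h', if_neg h]

lemma patT_perm1 (i j k : Fin d) : patT i j k = patT i k j := by
  funext m; unfold patT
  have : (m = i ∨ m = j ∨ m = k) ↔ (m = i ∨ m = k ∨ m = j) := by tauto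
  exact if_congr this rfl rfl

lemma patT_perm2 (i j k : Fin d) : patT i j k = patT j k i := by
  funext m; unfold patT
  have : (m = i ∨ m = j ∨ m = k) ↔ (m = j ∨ m = k ∨ m = i) := by tauto
  exact if_congr this rfl rfl

def gp (p x : Fin d → ℝ) : ESp d := cvec (fun m => p m * x m / 2)

@[simp] lemma gp_apply (p x : Fin d → ℝ) (l : Fin d) : gp p x l = p l * x l / 2 := rfl

lemma gp_pat1_eq (p : Fin d → ℝ) (i : Fin d) :
    gp p (pat1 i) = EuclideanSpace.single i (p i / 2) := by
  apply esp_ext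
  intro m
  rw [gp_apply, EuclideanSpace.single_apply]
  by_cases h : m = i <;> simp [pat1, h] <;> ring

lemma gp_pat2_eq (p : Fin d → ℝ) (i : Fin d) :
    gp p (pat2 i) = EuclideanSpace.single i (p i) := by
  apply esp_ext
  intro m
  rw [gp_apply, EuclideanSpace.single_apply]
  by_cases h : m = i <;> simp [pat2, h] <;> ring

lemma gp_zero (p : Fin d → ℝ) : gp p (fun _ => 0) = 0 := by
  apply esp_ext
  intro m
  rw [gp_apply, zero_apply']
  ring

lemma cancel_left {a b : ℝ} (ha : a ≠ 0) (h : a * b = 0) : b = 0 :=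
  (mul_eq_zero.mp h).resolve_left ha


theorem main (d : ℕ) (hd : 3 ≤ d) (p : Fin d → ℝ) (hp : ∀ i, 0 < p i)
    (G R' : Set (ESp d)) (φ : ESp d → ESp d)
    (hG : G = {y : ESp d | ∃ x : Fin d → ℝ,
      (∀ i, x i = 0 ∨ x i = 1 ∨ x i = 2) ∧ ∀ i, y i = p i * x i / 2})
    (hbij : Set.BijOn φ G R')
    (hhyp : ∀ (c : ESp d) (a : ℝ), c ≠ 0 → ∃ (c' : ESp d) (a' : ℝ), c' ≠ 0 ∧
      φ '' (G ∩ {x | a < ⟪c, x⟫}) = R' ∩ {x | a' < ⟪c', x⟫} ∧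
      φ '' (G ∩ {x | ⟪c, x⟫ < a}) = R' ∩ {x | ⟪c', x⟫ < a'})
    (hfix0 : φ 0 = 0)
    (hfixE : ∀ i, φ (EuclideanSpace.single i (p i)) = EuclideanSpace.single i (p i))
    (hfixH : ∀ i, φ (EuclideanSpace.single i (p i / 2)) = EuclideanSpace.single i (p i / 2)) :
    ∀ g ∈ G, φ g = g := by
  have hpne : ∀ i, p i ≠ 0 := fun i => ne_of_gt (hp i)
  -- membership of grid points
  have memG : ∀ x : Fin d → ℝ, (∀ m, x m = 0 ∨ x m = 1 ∨ x m = 2) → gp p x ∈ G := by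
    intro x hx
    rw [hG]
    exact ⟨x, hx, fun m => rfl⟩
  have h0G : (0 : ESp d) ∈ G := by
    rw [← gp_zero p]
    exact memG _ (fun m => Or.inl rfl)
  -- the transfer principle
  have TR : ∀ (c : ESp d) (δ : ℝ), c ≠ 0 → ∃ (c' : ESp d) (a' : ℝ), c' ≠ 0 ∧
      (∀ g ∈ G, ⟪c, g⟫ = δ → ⟪c', φ g⟫ = a') ∧
      (∀ g ∈ G, δ < ⟪c, g⟫ → a' < ⟪c', φ g⟫) ∧
      (∀ g ∈ G, ⟪c, g⟫ < δ → ⟪c', φ g⟫ < a') := by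
    intro c δ hc
    obtain ⟨c', a', hc', hplus, hminus⟩ := hhyp c δ hc
    have hgt : ∀ g ∈ G, δ < ⟪c, g⟫ → a' < ⟪c', φ g⟫ := by
      intro g hg h
      have hmem : φ g ∈ R' ∩ {x | a' < ⟪c', x⟫} := by
        rw [← hplus]; exact ⟨g, ⟨hg, h⟩, rfl⟩
      exact hmem.2
    have hlt : ∀ g ∈ G, ⟪c, g⟫ < δ → ⟪c', φ g⟫ < a' := by
      intro g hg h
      have hmem : φ g ∈ R' ∩ {x | ⟪c', x⟫ < a'} := by
        rw [← hminus]; exact ⟨g, ⟨hg, h⟩, rfl⟩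
      exact hmem.2
    refine ⟨c', a', hc', ?_, hgt, hlt⟩
    intro g hg h
    rcases lt_trichotomy (⟪c', φ g⟫) a' with hl | he | hg'
    · have hmem : φ g ∈ R' ∩ {x | ⟪c', x⟫ < a'} := ⟨hbij.mapsTo hg, hl⟩
      rw [← hminus] at hmem
      obtain ⟨g', ⟨hg'', hlt'⟩, he'⟩ := hmem
      have heg := hbij.injOn hg'' hg he'
      rw [heg] at hlt'
      have hx : ⟪c, g⟫ < δ := hlt'
      exfalso; rw [h] at hx; exact lt_irrefl δ hx
    · exact he
    · have hmem : φ g ∈ R' ∩ {x | a' < ⟪c', x⟫} := ⟨hbij.mapsTo hg, hg'⟩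
      rw [← hplus] at hmem
      obtain ⟨g', ⟨hg'', hlt'⟩, he'⟩ := hmem
      have heg := hbij.injOn hg'' hg he'
      rw [heg] at hlt'
      have hx : δ < ⟪c, g⟫ := hlt'
      exfalso; rw [h] at hx; exact lt_irrefl δ hx
  have keySingle : ∀ (i : Fin d) (w : ESp d),
      ⟪cvec (fun m => if m = i then (1:ℝ) else 0), w⟫ = w i := by
    intro i w
    rw [inner_cvec]
    rw [sum_support1 _ i (fun m hm => by simp [hm])]
    simp
  -- Phase 0 : zero coordinates and positivity are preserved
  have P0 : ∀ i : Fin d, (∀ g ∈ G, g i = 0 → φ g i = 0) ∧ (∀ g ∈ G, 0 < g i → 0 < φ g i) := by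
    intro i
    obtain ⟨c', a', hc', heq, hgt, _⟩ :=
      TR (cvec (fun m => if m = i then (1:ℝ) else 0)) 0 (cvec_ne _ i (by simp))
    have ha' : a' = 0 := by
      have h1 := heq 0 h0G (by rw [keySingle]; rfl)
      rw [hfix0, inner_zero_right] at h1
      exact h1.symm
    have hcm : ∀ m, m ≠ i → c' m = 0 := by
      intro m hmi
      have hmem := memG _ (pat2_range m)
      have hval : ⟪cvec (fun n => if n = i then (1:ℝ) else 0), gp p (pat2 m)⟫ = 0 := by
        rw [keySingle, gp_apply]
        have : pat2 m i = 0 := by simp [pat2, Ne.symm hmi]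
        rw [this]; ring
      have h2 := heq _ hmem hval
      rw [gp_pat2_eq p m, hfixE m, EuclideanSpace.inner_single_right, ha'] at h2
      simp only [conj_trivial] at h2
      have := cancel_left (hpne m) (by linarith [h2] : p m * c' m = 0)
      exact this
    have hci : 0 < c' i := by
      have hmem := memG _ (pat2_range i)
      have hval : (0:ℝ) < ⟪cvec (fun n => if n = i then (1:ℝ) else 0), gp p (pat2 i)⟫ := by
        rw [keySingle, gp_apply]
        simp [pat2]
        linarith [hp i]
      have h2 := hgt _ hmem hval
      rw [gp_pat2_eq p i, hfixE i, EuclideanSpace.inner_single_right, ha'] at h2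
      simp only [conj_trivial] at h2
      nlinarith [hp i]
    constructor
    · intro g hg hgi
      have h2 := heq g hg (by rw [keySingle]; exact hgi)
      rw [inner_expand, ha'] at h2
      rw [sum_support1 (fun m => c' m * φ g m) i (fun m hm => by have := hcm m hm; simp [this])] at h2
      exact cancel_left (ne_of_gt hci) h2
    · intro g hg hgi
      have h2 := hgt g hg (by rw [keySingle]; exact hgi)
      rw [inner_expand, ha'] at h2
      rw [sum_support1 (fun m => c' m * φ g m) i (fun m hm => by have := hcm m hm; simp [this])] at h2
      nlinarith

  -- A-points (half-sum midpoints)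
  have memA : ∀ i j : Fin d, gp p (patA i j) ∈ G := fun i j => memG _ (patA_range i j)
  have hA_applyi : ∀ i j : Fin d, (gp p (patA i j)) i = p i / 2 := by
    intro i j
    rw [gp_apply]
    unfold patA
    rw [if_pos rfl]
    ring
  have hA_applyj : ∀ i j : Fin d, i ≠ j → (gp p (patA i j)) j = p j / 2 := by
    intro i j hij
    rw [gp_apply]
    unfold patA
    rw [if_neg (Ne.symm hij), if_pos rfl]
    ring
  have hA_apply0 : ∀ i j m : Fin d, m ≠ i → m ≠ j → (gp p (patA i j)) m = 0 := by
    intro i j m h1 h2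
    rw [gp_apply]
    unfold patA
    rw [if_neg h1, if_neg h2]
    ring
  have hφA0 : ∀ i j m : Fin d, m ≠ i → m ≠ j → φ (gp p (patA i j)) m = 0 :=
    fun i j m h1 h2 => (P0 m).1 _ (memA i j) (hA_apply0 i j m h1 h2)
  have hφAiPos : ∀ i j : Fin d, 0 < φ (gp p (patA i j)) i :=
    fun i j => (P0 i).2 _ (memA i j) (by rw [hA_applyi]; linarith [hp i])
  have hφAjPos : ∀ i j : Fin d, i ≠ j → 0 < φ (gp p (patA i j)) j :=
    fun i j hij => (P0 j).2 _ (memA i j) (by rw [hA_applyj i j hij]; linarith [hp j])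
  -- I2 : the simplex hyperplane relation
  have I2 : ∀ i j : Fin d, i ≠ j →
      p j * (φ (gp p (patA i j)) i) + p i * (φ (gp p (patA i j)) j) = p i * p j := by
    intro i j hij
    obtain ⟨c', a', hc', heq, _, _⟩ := TR (cvec (fun m => 1 / p m)) 1
      (cvec_ne _ i (one_div_ne_zero (hpne i)))
    have hcm : ∀ m, c' m * p m = a' := by
      intro m
      have hval : ⟪cvec (fun n => 1 / p n), gp p (pat2 m)⟫ = 1 := by
        rw [inner_cvec, sum_support1 _ m ?_]
        · show 1 / p m * (p m * pat2 m m / 2) = 1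
          unfold pat2; rw [if_pos rfl]
          field_simp [hpne m]
        · intro n hn
          show 1 / p n * (p n * pat2 m n / 2) = 0
          unfold pat2; rw [if_neg hn]; ring
      have h2 := heq _ (memG _ (pat2_range m)) hval
      rw [gp_pat2_eq p m, hfixE m, EuclideanSpace.inner_single_right] at h2
      simp only [conj_trivial] at h2
      linarith [h2]
    have ha0 : a' ≠ 0 := by
      intro h0
      apply hc'
      apply esp_ext
      intro m
      rw [zero_apply']
      have := hcm m
      rw [h0] at this
      exact (mul_eq_zero.mp this).resolve_right (hpne m)
    have hval : ⟪cvec (fun n => 1 / p n), gp p (patA i j)⟫ = 1 := by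
      rw [inner_cvec, sum_support2 _ i j hij ?_]
      · show 1 / p i * (p i * patA i j i / 2) + 1 / p j * (p j * patA i j j / 2) = 1
        unfold patA
        rw [if_pos rfl, if_neg (Ne.symm hij), if_pos rfl]
        field_simp [hpne i, hpne j]
        norm_num
      · intro m h1 h2
        show 1 / p m * (p m * patA i j m / 2) = 0
        unfold patA
        rw [if_neg h1, if_neg h2]
        ring
    have h2 := heq _ (memA i j) hval
    rw [inner_expand] at h2
    rw [sum_support2 (fun m => c' m * φ (gp p (patA i j)) m) i j hij
      (fun m hm1 hm2 => by have := hφA0 i j m hm1 hm2; simp [this])] at h2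
    have key : a' * (p j * φ (gp p (patA i j)) i + p i * φ (gp p (patA i j)) j)
        = a' * (p i * p j) := by
      linear_combination (p i * p j) * h2 - (φ (gp p (patA i j)) i * p j) * hcm i
        - (φ (gp p (patA i j)) j * p i) * hcm j
    exact mul_left_cancel₀ ha0 key

  -- I3 : pencil through the half-points e_m' (m ≠ i)
  have I3 : ∀ i j k : Fin d, i ≠ j → i ≠ k → j ≠ k →
      φ (gp p (patA i j)) i = φ (gp p (patA i k)) i := by
    intro i j k hij hik hjk
    obtain ⟨c', a', hc', heq, _, _⟩ := TR (cvec (fun m => if m = i then 0 else 2 / p m)) 1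
      (cvec_ne _ j (by
        show (if j = i then (0:ℝ) else 2 / p j) ≠ 0
        rw [if_neg (Ne.symm hij)]
        exact div_ne_zero two_ne_zero (hpne j)))
    have hcm : ∀ m, m ≠ i → p m / 2 * c' m = a' := by
      intro m hmi
      have hval : ⟪cvec (fun n => if n = i then 0 else 2 / p n), gp p (pat1 m)⟫ = 1 := by
        rw [inner_cvec, sum_support1 _ m ?_]
        · show (if m = i then (0:ℝ) else 2 / p m) * (p m * pat1 m m / 2) = 1
          unfold pat1
          rw [if_neg hmi, if_pos rfl]
          field_simp [hpne m]
        · intro n hn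
          show (if n = i then (0:ℝ) else 2 / p n) * (p n * pat1 m n / 2) = 0
          unfold pat1
          rw [if_neg hn]
          ring
      have h2 := heq _ (memG _ (pat1_range m)) hval
      rw [gp_pat1_eq p m, hfixH m, EuclideanSpace.inner_single_right] at h2
      simp only [conj_trivial] at h2
      exact h2
    have hvalA : ∀ l : Fin d, i ≠ l →
        ⟪cvec (fun n => if n = i then 0 else 2 / p n), gp p (patA i l)⟫ = 1 := by
      intro l hil
      rw [inner_cvec, sum_support2 _ i l hil ?_]
      · show (if i = i then (0:ℝ) else 2 / p i) * (p i * patA i l i / 2)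
          + (if l = i then (0:ℝ) else 2 / p l) * (p l * patA i l l / 2) = 1
        unfold patA
        rw [if_pos rfl, if_pos rfl, if_neg (Ne.symm hil), if_neg (Ne.symm hil), if_pos rfl]
        field_simp [hpne l]
        norm_num
      · intro m hm1 hm2
        show (if m = i then (0:ℝ) else 2 / p m) * (p m * patA i l m / 2) = 0
        unfold patA
        rw [if_neg hm1, if_neg hm2, if_neg hm1]
        ring
    have E1 := heq _ (memA i j) (hvalA j hij)
    have E2 := heq _ (memA i k) (hvalA k hik)
    rw [inner_expand, sum_support2 (fun m => c' m * φ (gp p (patA i j)) m) i j hij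
      (fun m hm1 hm2 => by have := hφA0 i j m hm1 hm2; simp [this])] at E1
    rw [inner_expand, sum_support2 (fun m => c' m * φ (gp p (patA i k)) m) i k hik
      (fun m hm1 hm2 => by have := hφA0 i k m hm1 hm2; simp [this])] at E2
    have r1 := I2 i j hij
    have r2 := I2 i k hik
    have G1 : c' i * φ (gp p (patA i j)) i * (p i * p j)
        = a' * (2 * φ (gp p (patA i j)) i - p i) * p j := by
      linear_combination (p i * p j) * E1 - (2 * p i * φ (gp p (patA i j)) j) * hcm j (Ne.symm hij)
        - (2 * a') * r1
    have G2 : c' i * φ (gp p (patA i k)) i * (p i * p k)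
        = a' * (2 * φ (gp p (patA i k)) i - p i) * p k := by
      linear_combination (p i * p k) * E2 - (2 * p i * φ (gp p (patA i k)) k) * hcm k (Ne.symm hik)
        - (2 * a') * r2
    have ha0 : a' ≠ 0 := by
      intro h0
      apply hc'
      apply esp_ext
      intro m
      rw [zero_apply']
      rcases eq_or_ne m i with hmi | hmi
      · rw [hmi]
        rw [h0] at G1
        have hx := hφAiPos i j
        have h5 : c' i * φ (gp p (patA i j)) i * (p i * p j) = 0 * (p i * p j) := by
          rw [G1]; ring
        have h6 := mul_right_cancel₀ (mul_ne_zero (hpne i) (hpne j)) h5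
        exact (mul_eq_zero.mp h6).resolve_right (ne_of_gt hx)
      · have := hcm m hmi
        rw [h0] at this
        have hpm2 : p m / 2 ≠ 0 := by
          have := hpne m
          intro hz
          apply this
          linarith
        exact (mul_eq_zero.mp this).resolve_left hpm2
    have hz : a' * (p i * p j * p k * (φ (gp p (patA i j)) i - φ (gp p (patA i k)) i)) = 0 := by
      linear_combination (φ (gp p (patA i j)) i * p j) * G2 - (φ (gp p (patA i k)) i * p k) * G1
    have h3 := cancel_left ha0 hz
    have h4 := cancel_left (mul_ne_zero (mul_ne_zero (hpne i) (hpne j)) (hpne k)) h3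
    exact sub_eq_zero.mp h4

  -- I4 : pencil through the half-points e_m' (m ≠ j)
  have I4 : ∀ i j k : Fin d, i ≠ j → i ≠ k → j ≠ k →
      φ (gp p (patA j k)) j = φ (gp p (patA i j)) j := by
    intro i j k hij hik hjk
    obtain ⟨c', a', hc', heq, _, _⟩ := TR (cvec (fun m => if m = j then 0 else 2 / p m)) 1
      (cvec_ne _ i (by
        show (if i = j then (0:ℝ) else 2 / p i) ≠ 0
        rw [if_neg hij]
        exact div_ne_zero two_ne_zero (hpne i)))
    have hcm : ∀ m, m ≠ j → p m / 2 * c' m = a' := by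
      intro m hmj
      have hval : ⟪cvec (fun n => if n = j then 0 else 2 / p n), gp p (pat1 m)⟫ = 1 := by
        rw [inner_cvec, sum_support1 _ m ?_]
        · show (if m = j then (0:ℝ) else 2 / p m) * (p m * pat1 m m / 2) = 1
          unfold pat1
          rw [if_neg hmj, if_pos rfl]
          field_simp [hpne m]
        · intro n hn
          show (if n = j then (0:ℝ) else 2 / p n) * (p n * pat1 m n / 2) = 0
          unfold pat1
          rw [if_neg hn]
          ring
      have h2 := heq _ (memG _ (pat1_range m)) hval
      rw [gp_pat1_eq p m, hfixH m, EuclideanSpace.inner_single_right] at h2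
      simp only [conj_trivial] at h2
      exact h2
    have hval1 : ⟪cvec (fun n => if n = j then 0 else 2 / p n), gp p (patA i j)⟫ = 1 := by
      rw [inner_cvec, sum_support2 _ i j hij ?_]
      · show (if i = j then (0:ℝ) else 2 / p i) * (p i * patA i j i / 2)
          + (if j = j then (0:ℝ) else 2 / p j) * (p j * patA i j j / 2) = 1
        unfold patA
        rw [if_neg hij, if_pos rfl, if_pos rfl]
        field_simp [hpne i]
        norm_num
      · intro m hm1 hm2
        show (if m = j then (0:ℝ) else 2 / p m) * (p m * patA i j m / 2) = 0
        unfold patA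
        rw [if_neg hm1, if_neg hm2, if_neg hm2]
        ring
    have hval2 : ⟪cvec (fun n => if n = j then 0 else 2 / p n), gp p (patA j k)⟫ = 1 := by
      rw [inner_cvec, sum_support2 _ j k hjk ?_]
      · show (if j = j then (0:ℝ) else 2 / p j) * (p j * patA j k j / 2)
          + (if k = j then (0:ℝ) else 2 / p k) * (p k * patA j k k / 2) = 1
        unfold patA
        rw [if_pos rfl, if_pos rfl, if_neg (Ne.symm hjk), if_neg (Ne.symm hjk), if_pos rfl]
        field_simp [hpne k]
        norm_num
      · intro m hm1 hm2
        show (if m = j then (0:ℝ) else 2 / p m) * (p m * patA j k m / 2) = 0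
        unfold patA
        rw [if_neg hm1, if_neg hm2, if_neg hm1]
        ring
    have E1 := heq _ (memA i j) hval1
    have E2 := heq _ (memA j k) hval2
    rw [inner_expand, sum_support2 (fun m => c' m * φ (gp p (patA i j)) m) i j hij
      (fun m hm1 hm2 => by have := hφA0 i j m hm1 hm2; simp [this])] at E1
    rw [inner_expand, sum_support2 (fun m => c' m * φ (gp p (patA j k)) m) j k hjk
      (fun m hm1 hm2 => by have := hφA0 j k m hm1 hm2; simp [this])] at E2
    have r1 := I2 i j hij
    have r3 := I2 j k hjk
    have G1 : c' j * φ (gp p (patA i j)) j * (p j * p i)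
        = a' * (2 * φ (gp p (patA i j)) j - p j) * p i := by
      linear_combination (p i * p j) * E1 - (2 * p j * φ (gp p (patA i j)) i) * hcm i hij
        - (2 * a') * r1
    have G2 : c' j * φ (gp p (patA j k)) j * (p j * p k)
        = a' * (2 * φ (gp p (patA j k)) j - p j) * p k := by
      linear_combination (p j * p k) * E2 - (2 * p j * φ (gp p (patA j k)) k) * hcm k (Ne.symm hjk)
        - (2 * a') * r3
    have ha0 : a' ≠ 0 := by
      intro h0
      apply hc'
      apply esp_ext
      intro m
      rw [zero_apply']
      rcases eq_or_ne m j with hmj | hmj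
      · rw [hmj]
        rw [h0] at G1
        have hx := hφAjPos i j hij
        have h5 : c' j * φ (gp p (patA i j)) j * (p j * p i) = 0 * (p j * p i) := by
          rw [G1]; ring
        have h6 := mul_right_cancel₀ (mul_ne_zero (hpne j) (hpne i)) h5
        exact (mul_eq_zero.mp h6).resolve_right (ne_of_gt hx)
      · have := hcm m hmj
        rw [h0] at this
        have hpm2 : p m / 2 ≠ 0 := by
          have := hpne m
          intro hz
          apply this
          linarith
        exact (mul_eq_zero.mp this).resolve_left hpm2
    have hz : a' * (p i * p j * p k * (φ (gp p (patA j k)) j - φ (gp p (patA i j)) j)) = 0 := by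
      linear_combination (φ (gp p (patA j k)) j * p k) * G1 - (φ (gp p (patA i j)) j * p i) * G2
    have h3 := cancel_left ha0 hz
    have h4 := cancel_left (mul_ne_zero (mul_ne_zero (hpne i) (hpne j)) (hpne k)) h3
    exact sub_eq_zero.mp h4

  -- T-points
  have memT : ∀ i j k : Fin d, gp p (patT i j k) ∈ G := fun i j k => memG _ (patT_range i j k)
  have hT_apply1 : ∀ i j k m : Fin d, (m = i ∨ m = j ∨ m = k) → (gp p (patT i j k)) m = p m / 2 := by
    intro i j k m hm
    rw [gp_apply]
    unfold patT
    rw [if_pos hm]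
    ring
  have hT_apply0 : ∀ i j k m : Fin d, m ≠ i → m ≠ j → m ≠ k → (gp p (patT i j k)) m = 0 := by
    intro i j k m h1 h2 h3
    rw [gp_apply]
    unfold patT
    rw [if_neg (by tauto : ¬(m = i ∨ m = j ∨ m = k))]
    ring
  have hφT0 : ∀ i j k m : Fin d, m ≠ i → m ≠ j → m ≠ k → φ (gp p (patT i j k)) m = 0 :=
    fun i j k m h1 h2 h3 => (P0 m).1 _ (memT i j k) (hT_apply0 i j k m h1 h2 h3)
  have hφTpos : ∀ i j k m : Fin d, (m = i ∨ m = j ∨ m = k) → 0 < φ (gp p (patT i j k)) m :=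
    fun i j k m hm => (P0 m).2 _ (memT i j k)
      (by rw [hT_apply1 i j k m hm]; linarith [hp m])
  -- I5 : pencil through the coordinate codimension-2 flats
  have I5 : ∀ i j k : Fin d, i ≠ j → i ≠ k → j ≠ k →
      φ (gp p (patT i j k)) j * φ (gp p (patA i j)) i
        = φ (gp p (patT i j k)) i * φ (gp p (patA i j)) j := by
    intro i j k hij hik hjk
    obtain ⟨c', a', hc', heq, hgt, hlt⟩ :=
      TR (cvec (fun m => if m = i then 1 / p i else if m = j then -(1 / p j) else 0)) 0
      (cvec_ne _ i (by
        show (if i = i then 1 / p i else if i = j then -(1 / p j) else 0) ≠ 0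
        rw [if_pos rfl]
        exact one_div_ne_zero (hpne i)))
    have ha' : a' = 0 := by
      have h1 := heq 0 h0G (by rw [inner_zero_right])
      rw [hfix0, inner_zero_right] at h1
      exact h1.symm
    have hcm : ∀ m, m ≠ i → m ≠ j → c' m = 0 := by
      intro m hm1 hm2
      have hval : ⟪cvec (fun n => if n = i then 1 / p i else if n = j then -(1 / p j) else 0),
          gp p (pat2 m)⟫ = 0 := by
        rw [inner_cvec, sum_support1 _ m ?_]
        · show (if m = i then 1 / p i else if m = j then -(1 / p j) else 0)
            * (p m * pat2 m m / 2) = 0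
          rw [if_neg hm1, if_neg hm2]
          ring
        · intro n hn
          show (if n = i then 1 / p i else if n = j then -(1 / p j) else 0)
            * (p n * pat2 m n / 2) = 0
          unfold pat2
          rw [if_neg hn]
          ring
      have h2 := heq _ (memG _ (pat2_range m)) hval
      rw [gp_pat2_eq p m, hfixE m, EuclideanSpace.inner_single_right, ha'] at h2
      simp only [conj_trivial] at h2
      exact (mul_eq_zero.mp h2).resolve_left (hpne m)
    have hsgnj : p j * c' j < 0 := by
      have hval : ⟪cvec (fun n => if n = i then 1 / p i else if n = j then -(1 / p j) else 0),
          gp p (pat2 j)⟫ < 0 := by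
        rw [inner_cvec, sum_support1 _ j ?_]
        · show (if j = i then 1 / p i else if j = j then -(1 / p j) else 0)
            * (p j * pat2 j j / 2) < 0
          unfold pat2
          rw [if_neg (Ne.symm hij), if_pos rfl, if_pos rfl]
          have := hp j
          have h9 : -(1 / p j) * (p j * 2 / 2) = -1 := by field_simp
          rw [h9]
          norm_num
        · intro n hn
          show (if n = i then 1 / p i else if n = j then -(1 / p j) else 0)
            * (p n * pat2 j n / 2) = 0
          unfold pat2
          rw [if_neg hn, if_neg hn]
          ring
      have h2 := hlt _ (memG _ (pat2_range j)) hval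
      rw [gp_pat2_eq p j, hfixE j, EuclideanSpace.inner_single_right, ha'] at h2
      simp only [conj_trivial] at h2
      exact h2
    have hcj : c' j ≠ 0 := by
      intro h0
      rw [h0, mul_zero] at hsgnj
      exact lt_irrefl 0 hsgnj
    have hvalA : ⟪cvec (fun n => if n = i then 1 / p i else if n = j then -(1 / p j) else 0),
        gp p (patA i j)⟫ = 0 := by
      rw [inner_cvec, sum_support2 _ i j hij ?_]
      · show (if i = i then 1 / p i else if i = j then -(1 / p j) else 0) * (p i * patA i j i / 2)
          + (if j = i then 1 / p i else if j = j then -(1 / p j) else 0)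
            * (p j * patA i j j / 2) = 0
        unfold patA
        rw [if_pos rfl, if_pos rfl, if_neg (Ne.symm hij), if_pos rfl, if_neg (Ne.symm hij),
          if_pos rfl]
        field_simp [hpne i, hpne j]
        norm_num
      · intro m hm1 hm2
        show (if m = i then 1 / p i else if m = j then -(1 / p j) else 0)
          * (p m * patA i j m / 2) = 0
        unfold patA
        rw [if_neg hm1, if_neg hm2, if_neg hm1]
        ring
    have hvalT : ⟪cvec (fun n => if n = i then 1 / p i else if n = j then -(1 / p j) else 0),
        gp p (patT i j k)⟫ = 0 := by
      rw [inner_cvec, sum_support3 _ i j k hij hik hjk ?_]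
      · show (if i = i then 1 / p i else if i = j then -(1 / p j) else 0) * (p i * patT i j k i / 2)
          + (if j = i then 1 / p i else if j = j then -(1 / p j) else 0) * (p j * patT i j k j / 2)
          + (if k = i then 1 / p i else if k = j then -(1 / p j) else 0)
            * (p k * patT i j k k / 2) = 0
        unfold patT
        rw [if_pos rfl, if_pos (Or.inl rfl), if_neg (Ne.symm hij), if_pos rfl,
          if_pos (Or.inr (Or.inl rfl)), if_neg (Ne.symm hik), if_neg (Ne.symm hjk),
          if_pos (Or.inr (Or.inr rfl))]
        field_simp [hpne i, hpne j]
        norm_num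
      · intro m hm1 hm2 hm3
        show (if m = i then 1 / p i else if m = j then -(1 / p j) else 0)
          * (p m * patT i j k m / 2) = 0
        unfold patT
        rw [if_neg (by tauto : ¬(m = i ∨ m = j ∨ m = k))]
        ring
    have M1 := heq _ (memA i j) hvalA
    have M2 := heq _ (memT i j k) hvalT
    rw [inner_expand, ha', sum_support2 (fun m => c' m * φ (gp p (patA i j)) m) i j hij
      (fun m hm1 hm2 => by have := hφA0 i j m hm1 hm2; simp [this])] at M1
    rw [inner_expand, ha', sum_support3 (fun m => c' m * φ (gp p (patT i j k)) m) i j k hij hik hjk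
      (fun m hm1 hm2 hm3 => by have := hφT0 i j k m hm1 hm2 hm3; simp [this])] at M2
    have hck := hcm k (Ne.symm hik) (Ne.symm hjk)
    rw [hck] at M2
    -- M1 : c' i * X1 + c' j * Y1 = 0 ; M2 : c' i * Ti + c' j * Tj + 0 * Tk = 0
    have hz : c' j * (φ (gp p (patT i j k)) j * φ (gp p (patA i j)) i
        - φ (gp p (patT i j k)) i * φ (gp p (patA i j)) j) = 0 := by
      linear_combination (φ (gp p (patA i j)) i) * M2 - (φ (gp p (patT i j k)) i) * M1
    have h4 := cancel_left hcj hz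
    exact sub_eq_zero.mp h4

  -- The midpoints A_ij are fixed
  have hA12 : ∀ i j : Fin d, i ≠ j → φ (gp p (patA i j)) = gp p (patA i j) := by
    intro i j hij
    obtain ⟨k, hki, hkj⟩ := exists_third hd i j
    have hik : i ≠ k := Ne.symm hki
    have hjk : j ≠ k := Ne.symm hkj
    have r1 := I2 i j hij
    have r2 := I2 i k hik
    have r3 := I2 j k hjk
    have s1 := I3 i j k hij hik hjk
    have s2 := I4 i j k hij hik hjk
    have w1 := I5 i j k hij hik hjk
    have w2 := I5 i k j hik hij hkj
    have w3 := I5 j k i hjk (Ne.symm hij) hki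
    rw [← patT_perm1 i j k] at w2
    rw [← patT_perm2 i j k] at w3
    set X1 := φ (gp p (patA i j)) i with hX1def
    set Y1 := φ (gp p (patA i j)) j with hY1def
    set X2 := φ (gp p (patA i k)) i with hX2def
    set Y2 := φ (gp p (patA i k)) k with hY2def
    set X3 := φ (gp p (patA j k)) j with hX3def
    set Y3 := φ (gp p (patA j k)) k with hY3def
    set Ti := φ (gp p (patT i j k)) i with hTidef
    set Tj := φ (gp p (patT i j k)) j with hTjdef
    set Tk := φ (gp p (patT i j k)) k with hTkdef
    rw [← s1] at w2 r2
    rw [s2] at w3 r3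
    have hY1pos : 0 < Y1 := hφAjPos i j hij
    have hTipos : 0 < Ti := hφTpos i j k i (Or.inl rfl)
    have hA' : p i * (Y2 * p j) = p i * (p k * Y1) := by linear_combination p j * r2 - p k * r1
    have hA2 := mul_left_cancel₀ (hpne i) hA'
    have hB' : p j * (Y3 * p i) = p j * (p k * X1) := by linear_combination p i * r3 - p k * r1
    have hB2 := mul_left_cancel₀ (hpne j) hB'
    have hC' : Y1 * (Tk * p i) = Y1 * (p k * Ti) := by
      linear_combination p i * w3 + Tj * hB2 + p k * w1
    have hC2 := mul_left_cancel₀ (ne_of_gt hY1pos) hC'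
    have hD' : (p k * Ti) * (X1 * p j - Y1 * p i) = 0 := by
      linear_combination (p i * p j) * w2 + (p i * Ti) * hA2 - (p j * X1) * hC2
    have hD := cancel_left (mul_ne_zero (hpne k) (ne_of_gt hTipos)) hD'
    have hX1v : X1 = p i / 2 := by
      have h4 : (2 * X1) * p j = p i * p j := by linarith
      have h5 := mul_right_cancel₀ (hpne j) h4
      linarith
    have hY1v : Y1 = p j / 2 := by
      have h4 : Y1 * p i = (p j / 2) * p i := by
        rw [hX1v] at hD
        linarith
      exact mul_right_cancel₀ (hpne i) h4
    apply esp_ext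
    intro m
    rcases eq_or_ne m i with hmi | hmi
    · rw [hmi, hA_applyi i j]
      exact hX1v
    rcases eq_or_ne m j with hmj | hmj
    · rw [hmj, hA_applyj i j hij]
      exact hY1v
    · rw [hA_apply0 i j m hmi hmj]
      exact hφA0 i j m hmi hmj

  -- P2 : the hyperplane x_i = p_i/2 pins coordinates
  have P2 : ∀ i : Fin d, ∀ g ∈ G, g i = p i / 2 → φ g i = p i / 2 := by
    intro i
    obtain ⟨c', a', hc', heq, _, _⟩ :=
      TR (cvec (fun m => if m = i then (1:ℝ) else 0)) (p i / 2) (cvec_ne _ i (by simp))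
    have hai : p i / 2 * c' i = a' := by
      have h2 := heq _ (memG _ (pat1_range i)) (by
        rw [keySingle, gp_apply]
        unfold pat1
        rw [if_pos rfl]
        ring)
      rw [gp_pat1_eq p i, hfixH i, EuclideanSpace.inner_single_right] at h2
      simp only [conj_trivial] at h2
      exact h2
    have hcm : ∀ m, m ≠ i → c' m = 0 := by
      intro m hmi
      have h2 := heq _ (memA i m) (by rw [keySingle]; exact hA_applyi i m)
      rw [hA12 i m (Ne.symm hmi)] at h2
      rw [inner_expand, sum_support2 (fun l => c' l * (gp p (patA i m)) l) i m (Ne.symm hmi)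
        (fun l hl1 hl2 => by
          show c' l * (gp p (patA i m)) l = 0
          rw [hA_apply0 i m l hl1 hl2]; ring)] at h2
      rw [hA_applyi i m, hA_applyj i m (Ne.symm hmi)] at h2
      have h3 : c' m * (p m / 2) = 0 := by linear_combination h2 - hai
      have hpm2 : (p m / 2) ≠ 0 := by
        have := hpne m
        intro hz
        apply this
        linarith
      exact (mul_eq_zero.mp h3).resolve_right hpm2
    have hci : c' i ≠ 0 := by
      intro h0
      apply hc'
      apply esp_ext
      intro m
      rw [zero_apply']
      rcases eq_or_ne m i with hmi | hmi
      · rw [hmi]; exact h0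
      · exact hcm m hmi
    intro g hg hgi
    have h2 := heq g hg (by rw [keySingle]; exact hgi)
    rw [inner_expand, sum_support1 (fun m => c' m * φ g m) i
      (fun m hm => by have := hcm m hm; simp [this])] at h2
    have h3 : c' i * (φ g i - p i / 2) = 0 := by linear_combination h2 - hai
    have h4 := cancel_left hci h3
    linarith [h4]
  -- B-points
  have memB : ∀ i j : Fin d, gp p (patB i j) ∈ G := fun i j => memG _ (patB_range i j)
  have hB_applyi : ∀ i j : Fin d, (gp p (patB i j)) i = p i := by
    intro i j
    rw [gp_apply]
    unfold patB
    rw [if_pos rfl]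
    ring
  have hB_applyj : ∀ i j : Fin d, i ≠ j → (gp p (patB i j)) j = p j / 2 := by
    intro i j hij
    rw [gp_apply]
    unfold patB
    rw [if_neg (Ne.symm hij), if_pos rfl]
    ring
  have hB_apply0 : ∀ i j m : Fin d, m ≠ i → m ≠ j → (gp p (patB i j)) m = 0 := by
    intro i j m h1 h2
    rw [gp_apply]
    unfold patB
    rw [if_neg h1, if_neg h2]
    ring
  have hB12 : ∀ i j : Fin d, i ≠ j → φ (gp p (patB i j)) = gp p (patB i j) := by
    intro i j hij
    obtain ⟨k, hki, hkj⟩ := exists_third hd i j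
    have hik : i ≠ k := Ne.symm hki
    have hjk : j ≠ k := Ne.symm hkj
    have hφBj : φ (gp p (patB i j)) j = p j / 2 := P2 j _ (memB i j) (hB_applyj i j hij)
    have hφB0 : ∀ m, m ≠ i → m ≠ j → φ (gp p (patB i j)) m = 0 :=
      fun m h1 h2 => (P0 m).1 _ (memB i j) (hB_apply0 i j m h1 h2)
    obtain ⟨c', a', hc', heq, _, _⟩ := TR (cvec (fun m =>
      if m = i then 1 / p i else if m = j then 0 else if m = k then 2 / p k else 1 / p m)) 1
      (cvec_ne _ i (by
        show (if i = i then 1 / p i else if i = j then 0 else if i = k then 2 / p k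
          else 1 / p i) ≠ 0
        rw [if_pos rfl]
        exact one_div_ne_zero (hpne i)))
    have hai : p i * c' i = a' := by
      have hval : ⟪cvec (fun m => if m = i then 1 / p i else if m = j then 0
          else if m = k then 2 / p k else 1 / p m), gp p (pat2 i)⟫ = 1 := by
        rw [inner_cvec, sum_support1 _ i ?_]
        · show (if i = i then 1 / p i else if i = j then 0 else if i = k then 2 / p k
            else 1 / p i) * (p i * pat2 i i / 2) = 1
          unfold pat2
          rw [if_pos rfl, if_pos rfl]
          field_simp [hpne i]
        · intro n hn
          show (if n = i then 1 / p i else if n = j then 0 else if n = k then 2 / p k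
            else 1 / p n) * (p n * pat2 i n / 2) = 0
          rw [pat2_eq0 hn]
          ring
      have h2 := heq _ (memG _ (pat2_range i)) hval
      rw [gp_pat2_eq p i, hfixE i, EuclideanSpace.inner_single_right] at h2
      simp only [conj_trivial] at h2
      exact h2
    have hak : p k / 2 * c' k = a' := by
      have hval : ⟪cvec (fun m => if m = i then 1 / p i else if m = j then 0
          else if m = k then 2 / p k else 1 / p m), gp p (pat1 k)⟫ = 1 := by
        rw [inner_cvec, sum_support1 _ k ?_]
        · show (if k = i then 1 / p i else if k = j then 0 else if k = k then 2 / p k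
            else 1 / p k) * (p k * pat1 k k / 2) = 1
          unfold pat1
          rw [if_neg hki, if_neg hkj, if_pos rfl, if_pos rfl]
          field_simp [hpne k]
        · intro n hn
          show (if n = i then 1 / p i else if n = j then 0 else if n = k then 2 / p k
            else 1 / p n) * (p n * pat1 k n / 2) = 0
          rw [pat1_eq0 hn]
          ring
      have h2 := heq _ (memG _ (pat1_range k)) hval
      rw [gp_pat1_eq p k, hfixH k, EuclideanSpace.inner_single_right] at h2
      simp only [conj_trivial] at h2
      exact h2
    have ham : ∀ m, m ≠ i → m ≠ j → m ≠ k → p m * c' m = a' := by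
      intro m hm1 hm2 hm3
      have hval : ⟪cvec (fun n => if n = i then 1 / p i else if n = j then 0
          else if n = k then 2 / p k else 1 / p n), gp p (pat2 m)⟫ = 1 := by
        rw [inner_cvec, sum_support1 _ m ?_]
        · show (if m = i then 1 / p i else if m = j then 0 else if m = k then 2 / p k
            else 1 / p m) * (p m * pat2 m m / 2) = 1
          unfold pat2
          rw [if_neg hm1, if_neg hm2, if_neg hm3, if_pos rfl]
          field_simp [hpne m]
        · intro n hn
          show (if n = i then 1 / p i else if n = j then 0 else if n = k then 2 / p k
            else 1 / p n) * (p n * pat2 m n / 2) = 0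
          rw [pat2_eq0 hn]
          ring
      have h2 := heq _ (memG _ (pat2_range m)) hval
      rw [gp_pat2_eq p m, hfixE m, EuclideanSpace.inner_single_right] at h2
      simp only [conj_trivial] at h2
      exact h2
    have haj : c' j = 0 := by
      have hval : ⟪cvec (fun n => if n = i then 1 / p i else if n = j then 0
          else if n = k then 2 / p k else 1 / p n), gp p (patA j k)⟫ = 1 := by
        rw [inner_cvec, sum_support2 _ j k hjk ?_]
        · show (if j = i then 1 / p i else if j = j then 0 else if j = k then 2 / p k
            else 1 / p j) * (p j * patA j k j / 2)
            + (if k = i then 1 / p i else if k = j then 0 else if k = k then 2 / p k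
            else 1 / p k) * (p k * patA j k k / 2) = 1
          unfold patA
          rw [if_neg (Ne.symm hij), if_pos rfl, if_pos rfl, if_neg hki, if_neg hkj,
            if_pos rfl, if_neg hkj, if_pos rfl]
          field_simp [hpne k]
          norm_num
        · intro m hm1 hm2
          show (if m = i then 1 / p i else if m = j then 0 else if m = k then 2 / p k
            else 1 / p m) * (p m * patA j k m / 2) = 0
          rw [patA_eq0 hm1 hm2]
          ring
      have h2 := heq _ (memA j k) hval
      rw [hA12 j k hjk] at h2
      rw [inner_expand, sum_support2 (fun l => c' l * (gp p (patA j k)) l) j k hjk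
        (fun l hl1 hl2 => by
          show c' l * (gp p (patA j k)) l = 0
          rw [hA_apply0 j k l hl1 hl2]; ring)] at h2
      rw [hA_applyi j k, hA_applyj j k hjk] at h2
      have h3 : c' j * (p j / 2) = 0 := by linear_combination h2 - hak
      have hpj2 : (p j / 2) ≠ 0 := by
        have := hpne j
        intro hz
        apply this
        linarith
      exact (mul_eq_zero.mp h3).resolve_right hpj2
    have ha0 : a' ≠ 0 := by
      intro h0
      apply hc'
      apply esp_ext
      intro m
      rw [zero_apply']
      rcases eq_or_ne m i with hmi | hmi
      · rw [hmi]
        rw [h0] at hai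
        exact (mul_eq_zero.mp hai).resolve_left (hpne i)
      rcases eq_or_ne m j with hmj | hmj
      · rw [hmj]; exact haj
      rcases eq_or_ne m k with hmk | hmk
      · rw [hmk]
        rw [h0] at hak
        have hpk2 : (p k / 2) ≠ 0 := by
          have := hpne k
          intro hz
          apply this
          linarith
        exact (mul_eq_zero.mp hak).resolve_left hpk2
      · have := ham m hmi hmj hmk
        rw [h0] at this
        exact (mul_eq_zero.mp this).resolve_left (hpne m)
    have hvalB : ⟪cvec (fun n => if n = i then 1 / p i else if n = j then 0
        else if n = k then 2 / p k else 1 / p n), gp p (patB i j)⟫ = 1 := by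
      rw [inner_cvec, sum_support2 _ i j hij ?_]
      · show (if i = i then 1 / p i else if i = j then 0 else if i = k then 2 / p k
          else 1 / p i) * (p i * patB i j i / 2)
          + (if j = i then 1 / p i else if j = j then 0 else if j = k then 2 / p k
          else 1 / p j) * (p j * patB i j j / 2) = 1
        unfold patB
        rw [if_pos rfl, if_pos rfl, if_neg (Ne.symm hij), if_pos rfl, if_neg (Ne.symm hij),
          if_pos rfl]
        field_simp [hpne i]
        norm_num
      · intro m hm1 hm2
        show (if m = i then 1 / p i else if m = j then 0 else if m = k then 2 / p k
          else 1 / p m) * (p m * patB i j m / 2) = 0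
        rw [patB_eq0 hm1 hm2]
        ring
    have h2 := heq _ (memB i j) hvalB
    rw [inner_expand, sum_support2 (fun m => c' m * φ (gp p (patB i j)) m) i j hij
      (fun m hm1 hm2 => by have := hφB0 m hm1 hm2; simp [this])] at h2
    rw [haj] at h2
    have h3 : c' i * (φ (gp p (patB i j)) i - p i) = 0 := by linear_combination h2 - hai
    have hci : c' i ≠ 0 := by
      intro h0
      rw [h0] at hai
      rw [mul_zero] at hai
      exact ha0 hai.symm
    have hφBi : φ (gp p (patB i j)) i = p i := by
      have h4 := cancel_left hci h3
      linarith [h4]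
    apply esp_ext
    intro m
    rcases eq_or_ne m i with hmi | hmi
    · rw [hmi, hB_applyi i j]
      exact hφBi
    rcases eq_or_ne m j with hmj | hmj
    · rw [hmj, hB_applyj i j hij]
      exact hφBj
    · rw [hB_apply0 i j m hmi hmj]
      exact hφB0 m hmi hmj
  -- P4 : the hyperplane x_i = p_i pins coordinates
  have P4 : ∀ i : Fin d, ∀ g ∈ G, g i = p i → φ g i = p i := by
    intro i
    obtain ⟨c', a', hc', heq, _, _⟩ :=
      TR (cvec (fun m => if m = i then (1:ℝ) else 0)) (p i) (cvec_ne _ i (by simp))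
    have hai : p i * c' i = a' := by
      have h2 := heq _ (memG _ (pat2_range i)) (by
        rw [keySingle, gp_apply]
        unfold pat2
        rw [if_pos rfl]
        ring)
      rw [gp_pat2_eq p i, hfixE i, EuclideanSpace.inner_single_right] at h2
      simp only [conj_trivial] at h2
      exact h2
    have hcm : ∀ m, m ≠ i → c' m = 0 := by
      intro m hmi
      have h2 := heq _ (memB i m) (by rw [keySingle]; exact hB_applyi i m)
      rw [hB12 i m (Ne.symm hmi)] at h2
      rw [inner_expand, sum_support2 (fun l => c' l * (gp p (patB i m)) l) i m (Ne.symm hmi)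
        (fun l hl1 hl2 => by
          show c' l * (gp p (patB i m)) l = 0
          rw [hB_apply0 i m l hl1 hl2]; ring)] at h2
      rw [hB_applyi i m, hB_applyj i m (Ne.symm hmi)] at h2
      have h3 : c' m * (p m / 2) = 0 := by linear_combination h2 - hai
      have hpm2 : (p m / 2) ≠ 0 := by
        have := hpne m
        intro hz
        apply this
        linarith
      exact (mul_eq_zero.mp h3).resolve_right hpm2
    have hci : c' i ≠ 0 := by
      intro h0
      apply hc'
      apply esp_ext
      intro m
      rw [zero_apply']
      rcases eq_or_ne m i with hmi | hmi
      · rw [hmi]; exact h0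
      · exact hcm m hmi
    intro g hg hgi
    have h2 := heq g hg (by rw [keySingle]; exact hgi)
    rw [inner_expand, sum_support1 (fun m => c' m * φ g m) i
      (fun m hm => by have := hcm m hm; simp [this])] at h2
    have h3 : c' i * (φ g i - p i) = 0 := by linear_combination h2 - hai
    have h4 := cancel_left hci h3
    linarith [h4]
  -- conclusion
  intro g hg
  have hgG := hg
  rw [hG] at hg
  obtain ⟨x, hx, hcoord⟩ := hg
  apply esp_ext
  intro m
  rcases hx m with h0 | h1 | h2
  · have hv : g m = 0 := by rw [hcoord m, h0]; ring
    rw [hv]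
    exact (P0 m).1 g hgG hv
  · have hv : g m = p m / 2 := by rw [hcoord m, h1]; ring
    rw [hv]
    exact P2 m g hgG hv
  · have hv : g m = p m := by rw [hcoord m, h2]; ring
    rw [hv]
    exact P4 m g hgG hv

end SC


/-- For `p` in the positive orthant of `ℝ^d`, `d ≥ 3`, the configuration
`G(p) = (D/2)(Q^d + 𝟏)` contains `p` and is framed by
`L(p) = {0, p₁e₁, …, p_d e_d, p₁e₁/2, …, p_d e_d/2}`. -/
theorem scaled_cube_framed
    (d : ℕ) (hd : 3 ≤ d) (p : ESp d) (hp : ∀ i, 0 < p i)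
    (G L : Set (ESp d))
    (hG : G = {y | ∃ x : Fin d → ℝ,
      (∀ i, x i = 0 ∨ x i = 1 ∨ x i = 2) ∧ ∀ i, y i = p i * x i / 2})
    (hL : L = insert (0 : ESp d)
      ({q | ∃ i, q = EuclideanSpace.single i (p i)} ∪
       {q | ∃ i, q = EuclideanSpace.single i (p i / 2)})) :
    p ∈ G ∧ FramedBy G L := by
  constructor
  · rw [hG]
    refine ⟨fun _ => 2, fun i => Or.inr (Or.inr rfl), fun i => by show p i = p i * 2 / 2; ring⟩
  · constructor
    · -- L ⊆ G
      intro q hq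
      rw [hL] at hq
      rw [hG]
      rcases Set.mem_insert_iff.mp hq with rfl | hq'
      · exact ⟨fun _ => 0, fun _ => Or.inl rfl, fun m => by
          show (0 : ESp d) m = p m * 0 / 2
          rw [SC.zero_apply']
          ring⟩
      rcases hq' with ⟨i, rfl⟩ | ⟨i, rfl⟩
      · exact ⟨SC.pat2 i, SC.pat2_range i, fun m => by rw [← SC.gp_pat2_eq p i]; rfl⟩
      · exact ⟨SC.pat1 i, SC.pat1_range i, fun m => by rw [← SC.gp_pat1_eq p i]; rfl⟩
    · intro R' φ hlaw hfixQ x hx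
      obtain ⟨hbij, hhyp⟩ := hlaw
      have hfix0 : φ 0 = 0 := hfixQ 0 (by rw [hL]; exact Set.mem_insert _ _)
      have hfixE : ∀ i, φ (EuclideanSpace.single i (p i)) = EuclideanSpace.single i (p i) :=
        fun i => hfixQ _ (by
          rw [hL]
          exact Set.mem_insert_iff.mpr (Or.inr (Set.mem_union_left _ ⟨i, rfl⟩)))
      have hfixH : ∀ i, φ (EuclideanSpace.single i (p i / 2))
          = EuclideanSpace.single i (p i / 2) :=
        fun i => hfixQ _ (by
          rw [hL]
          exact Set.mem_insert_iff.mpr (Or.inr (Set.mem_union_right _ ⟨i, rfl⟩)))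
      exact SC.main d hd p hp G R' φ hG hbij hhyp hfix0 hfixE hfixH x hx
end
end

section
/- For every polynomial ψ with integer coefficients, there exists a functional arrangement for the function ℝ → ℝ, x ↦ ψ(x). -/
open scoped RealInnerProductSpace

noncomputable section

/-! ### Auxiliary plane geometry -/

/-- A point of `ℝ²` from two coordinates. -/
def pt (a b : ℝ) : ESp 2 := WithLp.toLp 2 (fun i : Fin 2 => if i = 0 then a else b)

@[simp] lemma pt_zero (a b : ℝ) : pt a b 0 = a := rfl
@[simp] lemma pt_one (a b : ℝ) : pt a b 1 = b := rfl

lemma ptext (p : ESp 2) : p = pt (p 0) (p 1) := by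
  ext i; fin_cases i <;> rfl

lemma pt_inj {a b c d : ℝ} (h : pt a b = pt c d) : a = c ∧ b = d :=
  ⟨congrArg (fun p : ESp 2 => p 0) h, congrArg (fun p : ESp 2 => p 1) h⟩

lemma pt_ne_fst {a b c d : ℝ} (h : a ≠ c) : pt a b ≠ pt c d :=
  fun he => h (pt_inj he).1

lemma pt_ne_snd {a b c d : ℝ} (h : b ≠ d) : pt a b ≠ pt c d :=
  fun he => h (pt_inj he).2

lemma zero_eq_pt : (0 : ESp 2) = pt 0 0 := by
  ext i; fin_cases i <;> rfl

lemma inner2 (x y : ESp 2) : ⟪x, y⟫ = x 0 * y 0 + x 1 * y 1 := by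
  simp [PiLp.inner_apply, Fin.sum_univ_two, RCLike.inner_apply, starRingEnd_apply]; ring

lemma smul_e1_eq (t : ℝ) : t • e1 = pt t 0 := by
  ext i
  have h : (t • e1) i = t * e1 i := rfl
  rw [h]
  simp only [e1, EuclideanSpace.single_apply, pt, PiLp.toLp_apply]
  split_ifs <;> ring

/-- Collinearity of three points of the plane. -/
def col (a b x : ESp 2) : Prop :=
  (b 0 - a 0) * (x 1 - a 1) = (b 1 - a 1) * (x 0 - a 0)

lemma col_self_left (a b : ESp 2) : col a b a := by simp [col]

lemma col_self_right (a b : ESp 2) : col a b b := by simp [col]; ring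

lemma col_symm {a b x : ESp 2} (h : col a b x) : col b a x := by
  unfold col at h ⊢; linear_combination -h

/-- The normal vector of the line through `a` and `b`. -/
def cvec (a b : ESp 2) : ESp 2 := pt (a 1 - b 1) (b 0 - a 0)

def aval (a b : ESp 2) : ℝ := a 1 * b 0 - a 0 * b 1

lemma col_iff_inner (a b x : ESp 2) : col a b x ↔ ⟪cvec a b, x⟫ = aval a b := by
  rw [inner2]; unfold col cvec aval; simp only [pt_zero, pt_one]
  constructor <;> intro h <;> linear_combination h

lemma cvec_ne_zero {a b : ESp 2} (h : a ≠ b) : cvec a b ≠ 0 := by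
  intro hc
  apply h
  have h0 := congrArg (fun p : ESp 2 => p 0) hc
  have h1 := congrArg (fun p : ESp 2 => p 1) hc
  simp [cvec] at h0 h1
  rw [ptext a, ptext b]
  have : (0 : ESp 2) 0 = 0 := rfl
  have e0 : a 1 - b 1 = 0 := h0
  have e1' : b 0 - a 0 = 0 := h1
  rw [show a 0 = b 0 by linarith, show a 1 = b 1 by linarith]

lemma ne_zero_coords {c : ESp 2} (h : c ≠ 0) : ¬ (c 0 = 0 ∧ c 1 = 0) := by
  rintro ⟨h0, h1⟩
  exact h (by rw [ptext c, h0, h1, ← zero_eq_pt])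

lemma ker1 {c0 c1 d0 d1 w0 w1 : ℝ} (hc : ¬ (c0 = 0 ∧ c1 = 0))
    (hcd : c0 * d0 + c1 * d1 = 0) (hcw : c0 * w0 + c1 * w1 = 0) :
    d0 * w1 - d1 * w0 = 0 := by
  rcases not_and_or.1 hc with h | h
  · have : c0 * (d0 * w1 - d1 * w0) = 0 := by linear_combination w1 * hcd - d1 * hcw
    rcases mul_eq_zero.1 this with h' | h'
    · exact absurd h' h
    · exact h'
  · have : c1 * (d0 * w1 - d1 * w0) = 0 := by linear_combination (-w0) * hcd + d0 * hcw
    rcases mul_eq_zero.1 this with h' | h'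
    · exact absurd h' h
    · exact h'

lemma ker2 {c0 c1 d0 d1 w0 w1 : ℝ} (hd : ¬ (d0 = 0 ∧ d1 = 0))
    (hcd : c0 * d0 + c1 * d1 = 0) (hdw : d0 * w1 - d1 * w0 = 0) :
    c0 * w0 + c1 * w1 = 0 := by
  rcases not_and_or.1 hd with h | h
  · have : d0 * (c0 * w0 + c1 * w1) = 0 := by linear_combination c1 * hdw + w0 * hcd
    rcases mul_eq_zero.1 this with h' | h'
    · exact absurd h' h
    · exact h'
  · have : d1 * (c0 * w0 + c1 * w1) = 0 := by linear_combination (-c0) * hdw + w1 * hcd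
    rcases mul_eq_zero.1 this with h' | h'
    · exact absurd h' h
    · exact h'

lemma ne_coords {u v : ESp 2} (h : u ≠ v) : ¬ (v 0 - u 0 = 0 ∧ v 1 - u 1 = 0) := by
  rintro ⟨h0, h1⟩
  exact h (by rw [ptext u, ptext v, show u 0 = v 0 by linarith, show u 1 = v 1 by linarith])

/-- Any point collinear with two distinct points of a line is on the line. -/
lemma memline {c : ESp 2} {β : ℝ} (hc : c ≠ 0) {u v X : ESp 2}
    (hu : ⟪c, u⟫ = β) (hv : ⟪c, v⟫ = β) (huv : u ≠ v) (hX : col u v X) :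
    ⟪c, X⟫ = β := by
  rw [inner2] at hu hv ⊢
  have hcd : c 0 * (v 0 - u 0) + c 1 * (v 1 - u 1) = 0 := by linarith
  have hdw : (v 0 - u 0) * (X 1 - u 1) - (v 1 - u 1) * (X 0 - u 0) = 0 := by
    unfold col at hX; linarith
  have := ker2 (ne_coords huv) hcd hdw
  linarith

/-- Two points of a line and any third point of the line are collinear. -/
lemma colline {c : ESp 2} {β : ℝ} (hc : c ≠ 0) {u v X : ESp 2}
    (hu : ⟪c, u⟫ = β) (hv : ⟪c, v⟫ = β) (huv : u ≠ v) (hX : ⟪c, X⟫ = β) :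
    col u v X := by
  rw [inner2] at hu hv hX
  have hcd : c 0 * (v 0 - u 0) + c 1 * (v 1 - u 1) = 0 := by linarith
  have hcw : c 0 * (X 0 - u 0) + c 1 * (X 1 - u 1) = 0 := by linarith
  have := ker1 (ne_zero_coords hc) hcd hcw
  unfold col; linarith

/-- Two distinct lines meet in at most one point. -/
lemma uniq {A B C D E X : ESp 2} (hAB : A ≠ B) (hCD : C ≠ D)
    (hE1 : col A B E) (hE2 : col C D E) (hX1 : col A B X) (hX2 : col C D X)
    (hw : ¬ col A B D) : X = E := by
  by_contra hXE
  have hc2 := cvec_ne_zero hCD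
  have hE2' := (col_iff_inner C D E).1 hE2
  have hX2' := (col_iff_inner C D X).1 hX2
  have hD2' := (col_iff_inner C D D).1 (col_self_right C D)
  have hXED : col X E D := colline hc2 hX2' hE2' hXE hD2'
  have hc1 := cvec_ne_zero hAB
  have hE1' := (col_iff_inner A B E).1 hE1
  have hX1' := (col_iff_inner A B X).1 hX1
  have : ⟪cvec A B, D⟫ = aval A B := memline hc1 hX1' hE1' hXE hXED
  exact hw ((col_iff_inner A B D).2 this)
/-! ### Qsq facts -/

lemma ptQ {a b : ℝ} (ha : a = 0 ∨ a = 1 ∨ a = 2) (hb : b = 0 ∨ b = 1 ∨ b = 2) :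
    pt a b ∈ Qsq := by
  intro i; fin_cases i <;> simpa

lemma Qsq_finite : Qsq.Finite := by
  have h : Qsq ⊆ {x | x ∈ [pt 0 0, pt 0 1, pt 0 2, pt 1 0, pt 1 1, pt 1 2,
      pt 2 0, pt 2 1, pt 2 2]} := by
    intro p hp
    have h0 := hp 0
    have h1 := hp 1
    rw [ptext p]
    rcases h0 with h0 | h0 | h0 <;> rcases h1 with h1 | h1 | h1 <;>
      rw [h0, h1] <;> simp
  exact Set.Finite.subset (List.finite_toSet _) h

/-! ### Transfer of lines under Lawrence equivalences -/

lemma transfer {R R' : Set (ESp 2)} {φ : ESp 2 → ESp 2}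
    (hL : LawrenceEquivConfig R R' φ) (c : ESp 2) (α : ℝ) (hc : c ≠ 0) :
    ∃ (c' : ESp 2) (α' : ℝ), c' ≠ 0 ∧
      (∀ x ∈ R, ⟪c, x⟫ = α → ⟪c', φ x⟫ = α') ∧
      (∀ x ∈ R, ⟪c, x⟫ ≠ α → ⟪c', φ x⟫ ≠ α') := by
  obtain ⟨hbij, hsep⟩ := hL
  obtain ⟨c', α', hc', h1, h2⟩ := hsep c α hc
  refine ⟨c', α', hc', ?_, ?_⟩
  · intro x hx hxα
    by_contra h
    rcases lt_or_gt_of_ne h with hlt | hgt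
    · have hmem : φ x ∈ R' ∩ {y | ⟪c', y⟫ < α'} := ⟨hbij.mapsTo hx, hlt⟩
      rw [← h2] at hmem
      obtain ⟨z, ⟨hz, hzlt⟩, hze⟩ := hmem
      have := hbij.injOn hz hx hze
      subst this
      simp only [Set.mem_setOf_eq] at hzlt
      linarith
    · have hmem : φ x ∈ R' ∩ {y | α' < ⟪c', y⟫} := ⟨hbij.mapsTo hx, hgt⟩
      rw [← h1] at hmem
      obtain ⟨z, ⟨hz, hzlt⟩, hze⟩ := hmem
      have := hbij.injOn hz hx hze
      subst this
      simp only [Set.mem_setOf_eq] at hzlt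
      linarith
  · intro x hx hne heq
    rcases lt_or_gt_of_ne hne with hlt | hgt
    · have hmem : φ x ∈ φ '' (R ∩ {y | ⟪c, y⟫ < α}) := ⟨x, ⟨hx, hlt⟩, rfl⟩
      rw [h2] at hmem
      have := hmem.2
      simp only [Set.mem_setOf_eq] at this
      linarith
    · have hmem : φ x ∈ φ '' (R ∩ {y | α < ⟪c, y⟫}) := ⟨x, ⟨hx, hgt⟩, rfl⟩
      rw [h1] at hmem
      have := hmem.2
      simp only [Set.mem_setOf_eq] at this
      linarith

/-- The workhorse: a Lawrence equivalence preserves collinearity w.r.t. a pair of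
distinct points, and also non-collinearity. -/
lemma lineW {R R' : Set (ESp 2)} {φ : ESp 2 → ESp 2}
    (hL : LawrenceEquivConfig R R' φ) {a b : ESp 2}
    (ha : a ∈ R) (hb : b ∈ R) (hab : a ≠ b) :
    (∀ p ∈ R, col a b p → col (φ a) (φ b) (φ p)) ∧
    (∀ q ∈ R, ¬ col a b q → ¬ col (φ a) (φ b) (φ q)) := by
  obtain ⟨c', α', hc', hT1, hT2⟩ := transfer hL (cvec a b) (aval a b) (cvec_ne_zero hab)
  have hfa : ⟪c', φ a⟫ = α' := hT1 a ha ((col_iff_inner a b a).1 (col_self_left a b))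
  have hfb : ⟪c', φ b⟫ = α' := hT1 b hb ((col_iff_inner a b b).1 (col_self_right a b))
  have hphab : φ a ≠ φ b := fun h => hab (hL.1.injOn ha hb h)
  constructor
  · intro p hp hcol
    exact colline hc' hfa hfb hphab (hT1 p hp ((col_iff_inner a b p).1 hcol))
  · intro q hq hncol hcol
    exact hT2 q hq (fun h => hncol ((col_iff_inner a b q).2 h))
      (memline hc' hfa hfb hphab hcol)

/-- `p` is a point of `R` whose image under `φ` is forced to be `q`. -/
def Fd (R : Set (ESp 2)) (φ : ESp 2 → ESp 2) (p q : ESp 2) : Prop :=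
  p ∈ R ∧ φ p = q

/-- The step lemma: the image of a point determined as the intersection of two lines
spanned by points with forced images is itself forced. -/
lemma stepFd {R R' : Set (ESp 2)} {φ : ESp 2 → ESp 2}
    (hL : LawrenceEquivConfig R R' φ) {a b c d p A B C D E : ESp 2}
    (ha : Fd R φ a A) (hb : Fd R φ b B) (hc : Fd R φ c C) (hd : Fd R φ d D)
    (hp : p ∈ R) (hab : a ≠ b) (hcd : c ≠ d)
    (h1 : col a b p) (h2 : col c d p)
    (hw : ¬ col a b d ∨ ¬ col a b c)
    (hE1 : col A B E) (hE2 : col C D E) : Fd R φ p E := by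
  obtain ⟨haR, hfa⟩ := ha
  obtain ⟨hbR, hfb⟩ := hb
  obtain ⟨hcR, hfc⟩ := hc
  obtain ⟨hdR, hfd⟩ := hd
  refine ⟨hp, ?_⟩
  obtain ⟨W1ab, W2ab⟩ := lineW hL haR hbR hab
  have hAB : A ≠ B := by
    rw [← hfa, ← hfb]; exact fun h => hab (hL.1.injOn haR hbR h)
  have hX1 : col A B (φ p) := by rw [← hfa, ← hfb]; exact W1ab p hp h1
  rcases hw with hw | hw
  · obtain ⟨W1cd, _⟩ := lineW hL hcR hdR hcd
    have hCD : C ≠ D := by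
      rw [← hfc, ← hfd]; exact fun h => hcd (hL.1.injOn hcR hdR h)
    have hX2 : col C D (φ p) := by rw [← hfc, ← hfd]; exact W1cd p hp h2
    have hwD : ¬ col A B D := by rw [← hfa, ← hfb, ← hfd]; exact W2ab d hdR hw
    exact uniq hAB hCD hE1 hE2 hX1 hX2 hwD
  · obtain ⟨W1dc, _⟩ := lineW hL hdR hcR hcd.symm
    have hDC : D ≠ C := by
      rw [← hfc, ← hfd]; exact fun h => hcd (hL.1.injOn hcR hdR h.symm)
    have hX2 : col D C (φ p) := by
      rw [← hfc, ← hfd]; exact W1dc p hp (col_symm h2)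
    have hwC : ¬ col A B C := by rw [← hfa, ← hfb, ← hfc]; exact W2ab c hcR hw
    exact uniq hAB hDC hE1 (col_symm hE2) hX1 hX2 hwC

/-! ### Context lemmas -/

lemma fd_grid {R : Set (ESp 2)} {φ : ESp 2 → ESp 2} (hQ : Qsq ⊆ R)
    (hfix : ∀ q ∈ Qsq, φ q = q) {a b : ℝ}
    (ha : a = 0 ∨ a = 1 ∨ a = 2) (hb : b = 0 ∨ b = 1 ∨ b = 2) :
    Fd R φ (pt a b) (pt a b) :=
  ⟨hQ (ptQ ha hb), hfix _ (ptQ ha hb)⟩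

lemma fd_congr {R : Set (ESp 2)} {φ : ESp 2 → ESp 2} {p q p' q' : ESp 2}
    (h : Fd R φ p q) (hp : p = p') (hq : q = q') : Fd R φ p' q' := by
  rw [← hp, ← hq]; exact h

lemma fd_val {R R' : Set (ESp 2)} {φ : ESp 2 → ESp 2}
    (hL : LawrenceEquivConfig R R' φ) (hQ : Qsq ⊆ R) (hfix : ∀ q ∈ Qsq, φ q = q)
    {u u' : ℝ} (hu : Fd R φ (pt u 0) (pt u' 0)) {q : ℝ}
    (hq : q = 0 ∨ q = 1 ∨ q = 2) : (u = q ↔ u' = q) := by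
  have hg : Fd R φ (pt q 0) (pt q 0) := fd_grid hQ hfix hq (Or.inl rfl)
  constructor
  · intro h
    have h2 : φ (pt q 0) = pt u' 0 := by rw [← h]; exact hu.2
    rw [hg.2] at h2
    exact ((pt_inj h2).1).symm
  · intro h; subst h
    have : φ (pt u 0) = φ (pt u' 0) := by rw [hu.2, hg.2]
    have := hL.1.injOn hu.1 hg.1 this
    exact (pt_inj this).1
lemma colpt {a b c d e f : ℝ} :
    col (pt a b) (pt c d) (pt e f) ↔ (c - a) * (f - b) = (d - b) * (e - a) := by
  unfold col; simp

/-! ### The subtraction gadget -/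

/-- Auxiliary points realizing `(u,0), (v,0) ↦ (v-u, 0)`. -/
def subList (u v : ℝ) : List (ESp 2) := [pt (u/2) 1, pt (u-v) 2, pt (v-u) 0]

lemma fd_sub {R R' : Set (ESp 2)} {φ : ESp 2 → ESp 2}
    (hL : LawrenceEquivConfig R R' φ) (hQ : Qsq ⊆ R) (hfix : ∀ q ∈ Qsq, φ q = q)
    {u v u' v' : ℝ}
    (hu : Fd R φ (pt u 0) (pt u' 0)) (hv : Fd R φ (pt v 0) (pt v' 0))
    (m1 : pt (u/2) 1 ∈ R) (m2 : pt (u-v) 2 ∈ R) (m3 : pt (v-u) 0 ∈ R) :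
    Fd R φ (pt (u/2) 1) (pt (u'/2) 1) ∧ Fd R φ (pt (u-v) 2) (pt (u'-v') 2) ∧
      Fd R φ (pt (v-u) 0) (pt (v'-u') 0) := by
  have g00 := fd_grid hQ hfix (Or.inl rfl) (Or.inl rfl)
  have g01 := fd_grid hQ hfix (Or.inl rfl) (Or.inr (Or.inl rfl))
  have g02 := fd_grid hQ hfix (Or.inl rfl) (Or.inr (Or.inr rfl))
  have g10 := fd_grid hQ hfix (Or.inr (Or.inl rfl)) (Or.inl rfl)
  have g11 := fd_grid hQ hfix (Or.inr (Or.inl rfl)) (Or.inr (Or.inl rfl))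
  have g12 := fd_grid hQ hfix (Or.inr (Or.inl rfl)) (Or.inr (Or.inr rfl))
  -- step 1 : the point (u/2, 1)
  have S1 : Fd R φ (pt (u/2) 1) (pt (u'/2) 1) := by
    refine stepFd hL hu g02 g01 g11 m1 (pt_ne_snd (by norm_num)) (pt_ne_fst (by norm_num))
      (colpt.2 (by ring)) (colpt.2 (by ring)) ?_ (colpt.2 (by ring)) (colpt.2 (by ring))
    rcases eq_or_ne u 0 with h | h
    · left; intro hcol; have := colpt.1 hcol; rw [h] at this; norm_num at this
    · right; intro hcol; have := colpt.1 hcol; apply h; linarith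
  -- step 2 : the point (u - v, 2)
  have S2 : Fd R φ (pt (u-v) 2) (pt (u'-v') 2) := by
    refine stepFd hL S1 hv g02 g12 m2 (pt_ne_snd (by norm_num)) (pt_ne_fst (by norm_num))
      (colpt.2 (by ring)) (colpt.2 (by ring)) ?_ (colpt.2 (by ring)) (colpt.2 (by ring))
    rcases eq_or_ne v u with h | h
    · left; intro hcol; have := colpt.1 hcol; rw [h] at this; linarith
    · right; intro hcol; have := colpt.1 hcol; apply h; linarith
  -- step 3 : the point (v - u, 0)
  have S3 : Fd R φ (pt (v-u) 0) (pt (v'-u') 0) := by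
    refine stepFd hL S2 g01 g00 g10 m3 (pt_ne_snd (by norm_num)) (pt_ne_fst (by norm_num))
      (colpt.2 (by ring)) (colpt.2 (by ring)) ?_ (colpt.2 (by ring)) (colpt.2 (by ring))
    rcases eq_or_ne v u with h | h
    · left; intro hcol; have := colpt.1 hcol; rw [h] at this; linarith
    · right; intro hcol; have := colpt.1 hcol; apply h; linarith
  exact ⟨S1, S2, S3⟩

/-- The gadget producing the point `(1, w)` from `(w+1, 0)` and `(w-1, 2)`. -/
lemma fd_oneU {R R' : Set (ESp 2)} {φ : ESp 2 → ESp 2}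
    (hL : LawrenceEquivConfig R R' φ) (hQ : Qsq ⊆ R) (hfix : ∀ q ∈ Qsq, φ q = q)
    {w w' : ℝ}
    (h1 : Fd R φ (pt (w+1) 0) (pt (w'+1) 0)) (h2 : Fd R φ (pt (w-1) 2) (pt (w'-1) 2))
    (hm : pt 1 w ∈ R) : Fd R φ (pt 1 w) (pt 1 w') := by
  have g10 := fd_grid hQ hfix (Or.inr (Or.inl rfl)) (Or.inl rfl)
  have g12 := fd_grid hQ hfix (Or.inr (Or.inl rfl)) (Or.inr (Or.inr rfl))
  refine stepFd hL h1 h2 g10 g12 hm (pt_ne_snd (by norm_num)) (pt_ne_snd (by norm_num))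
    (colpt.2 (by ring)) (colpt.2 (by ring)) ?_ (colpt.2 (by ring)) (colpt.2 (by ring))
  rcases eq_or_ne w 0 with h | h
  · left; intro hcol; have := colpt.1 hcol; rw [h] at this; norm_num at this
  · right; intro hcol; have := colpt.1 hcol; apply h; nlinarith [this]
/-! ### The multiplication gadget -/

/-- Auxiliary points realizing `(u,0), (v,0) ↦ (0, u*v)`. -/
def mulList (u v : ℝ) : List (ESp 2) :=
  subList 1 0 ++ subList (-1) u ++ subList u 1 ++ subList v 0 ++ subList (-v) 0 ++
    [pt 1 u, pt 1 (-u), pt v (u*v), pt (-v) (u*v), pt 0 (u*v)]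

lemma sub_f2 {R R' : Set (ESp 2)} {φ : ESp 2 → ESp 2}
    (hL : LawrenceEquivConfig R R' φ) (hQ : Qsq ⊆ R) (hfix : ∀ q ∈ Qsq, φ q = q)
    {u v u' v' : ℝ}
    (hu : Fd R φ (pt u 0) (pt u' 0)) (hv : Fd R φ (pt v 0) (pt v' 0))
    (m1 : pt (u/2) 1 ∈ R) (m2 : pt (u-v) 2 ∈ R) (m3 : pt (v-u) 0 ∈ R) :
    List.Forall₂ (Fd R φ) (subList u v) (subList u' v') := by
  obtain ⟨S1, S2, S3⟩ := fd_sub hL hQ hfix hu hv m1 m2 m3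
  exact List.Forall₂.cons S1 (List.Forall₂.cons S2 (List.Forall₂.cons S3 List.Forall₂.nil))

lemma fd_mul {R R' : Set (ESp 2)} {φ : ESp 2 → ESp 2}
    (hL : LawrenceEquivConfig R R' φ) (hQ : Qsq ⊆ R) (hfix : ∀ q ∈ Qsq, φ q = q)
    {u v u' v' : ℝ}
    (hu : Fd R φ (pt u 0) (pt u' 0)) (hv : Fd R φ (pt v 0) (pt v' 0))
    (hm : ∀ p ∈ mulList u v, p ∈ R) :
    Fd R φ (pt 0 (u*v)) (pt 0 (u'*v')) ∧
      List.Forall₂ (Fd R φ) (mulList u v) (mulList u' v') := by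
  have g00 := fd_grid hQ hfix (Or.inl rfl) (Or.inl rfl)
  have g02 := fd_grid hQ hfix (Or.inl rfl) (Or.inr (Or.inr rfl))
  have g10 := fd_grid hQ hfix (Or.inr (Or.inl rfl)) (Or.inl rfl)
  -- the five subtraction chains
  have A1 := fd_sub hL hQ hfix g10 g00 (hm _ (by simp [mulList, subList]))
    (hm _ (by simp [mulList, subList])) (hm _ (by simp [mulList, subList]))
  have fdm1 : Fd R φ (pt (-1) 0) (pt (-1) 0) :=
    fd_congr A1.2.2 (by rw [show (0:ℝ)-1 = -1 by ring]) (by rw [show (0:ℝ)-1 = -1 by ring])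
  have A2 := fd_sub hL hQ hfix fdm1 hu (hm _ (by simp [mulList, subList]))
    (hm _ (by simp [mulList, subList])) (hm _ (by simp [mulList, subList]))
  have A3 := fd_sub hL hQ hfix hu g10 (hm _ (by simp [mulList, subList]))
    (hm _ (by simp [mulList, subList])) (hm _ (by simp [mulList, subList]))
  have A4 := fd_sub hL hQ hfix hv g00 (hm _ (by simp [mulList, subList]))
    (hm _ (by simp [mulList, subList])) (hm _ (by simp [mulList, subList]))
  have fdnv : Fd R φ (pt (-v) 0) (pt (-v') 0) :=
    fd_congr A4.2.2 (by rw [show (0:ℝ)-v = -v by ring]) (by rw [show (0:ℝ)-v' = -v' by ring])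
  have A5 := fd_sub hL hQ hfix fdnv g00 (hm _ (by simp [mulList, subList]))
    (hm _ (by simp [mulList, subList])) (hm _ (by simp [mulList, subList]))
  -- vertical anchor points
  have fdv2 : Fd R φ (pt v 2) (pt v' 2) :=
    fd_congr A4.2.1 (by rw [show v-0 = v by ring]) (by rw [show v'-0 = v' by ring])
  have fdnv2 : Fd R φ (pt (-v) 2) (pt (-v') 2) :=
    fd_congr A5.2.1 (by rw [show -v-0 = -v by ring]) (by rw [show -v'-0 = -v' by ring])
  -- the points (1, u) and (1, -u)
  have B1 : Fd R φ (pt 1 u) (pt 1 u') := by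
    refine fd_oneU hL hQ hfix
      (fd_congr A2.2.2 (by rw [show u - -1 = u+1 by ring]) (by rw [show u' - -1 = u'+1 by ring]))
      A3.2.1 (hm _ (by simp [mulList, subList]))
  have B2 : Fd R φ (pt 1 (-u)) (pt 1 (-u')) := by
    refine fd_oneU hL hQ hfix
      (fd_congr A3.2.2 (by rw [show 1-u = -u+1 by ring]) (by rw [show 1-u' = -u'+1 by ring]))
      (fd_congr A2.2.1 (by rw [show -1-u = -u-1 by ring]) (by rw [show -1-u' = -u'-1 by ring]))
      (hm _ (by simp [mulList, subList]))
  -- the two product points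
  have P1 : Fd R φ (pt v (u*v)) (pt v' (u'*v')) := by
    refine stepFd hL g00 B1 hv fdv2 (hm _ (by simp [mulList, subList]))
      (pt_ne_fst (by norm_num)) (pt_ne_snd (by norm_num))
      (colpt.2 (by ring)) (colpt.2 (by ring)) ?_ (colpt.2 (by ring)) (colpt.2 (by ring))
    rcases eq_or_ne (u*v) 2 with h | h
    · right; intro hcol; have := colpt.1 hcol; nlinarith [this]
    · left; intro hcol; have := colpt.1 hcol; apply h; linarith
  have P2 : Fd R φ (pt (-v) (u*v)) (pt (-v') (u'*v')) := by
    refine stepFd hL g00 B2 fdnv fdnv2 (hm _ (by simp [mulList, subList]))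
      (pt_ne_fst (by norm_num)) (pt_ne_snd (by norm_num))
      (colpt.2 (by ring)) (colpt.2 (by ring)) ?_ (colpt.2 (by ring)) (colpt.2 (by ring))
    rcases eq_or_ne (u*v) 2 with h | h
    · right; intro hcol; have := colpt.1 hcol; nlinarith [this]
    · left; intro hcol; have := colpt.1 hcol; apply h; nlinarith [this]
  -- the output point
  have OUT : Fd R φ (pt 0 (u*v)) (pt 0 (u'*v')) := by
    by_cases hv0 : v = 0
    · have hv0' : v' = 0 := (fd_val hL hQ hfix hv (Or.inl rfl)).1 hv0
      refine fd_congr g00 (by rw [hv0]; norm_num) (by rw [hv0']; norm_num)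
    · refine stepFd hL P1 P2 g00 g02 (hm _ (by simp [mulList, subList]))
        (pt_ne_fst (fun h => hv0 (by linarith))) (pt_ne_snd (by norm_num))
        (colpt.2 (by ring)) (colpt.2 (by ring)) ?_ (colpt.2 (by ring)) (colpt.2 (by ring))
      rcases eq_or_ne (u*v) 2 with h | h
      · right; intro hcol; have := colpt.1 hcol; rw [h] at this; apply hv0; linarith
      · left; intro hcol; have h2 := colpt.1 hcol
        have : v * (2 - u*v) = 0 := by linarith
        rcases mul_eq_zero.1 this with h' | h'
        · exact hv0 h'
        · exact h (by linarith)
  refine ⟨OUT, ?_⟩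
  unfold mulList
  refine List.rel_append (List.rel_append (List.rel_append
    (List.rel_append (List.rel_append ?_ ?_) ?_) ?_) ?_) ?_
  · exact List.Forall₂.cons A1.1 (List.Forall₂.cons A1.2.1
      (List.Forall₂.cons A1.2.2 List.Forall₂.nil))
  · exact List.Forall₂.cons A2.1 (List.Forall₂.cons A2.2.1
      (List.Forall₂.cons A2.2.2 List.Forall₂.nil))
  · exact List.Forall₂.cons A3.1 (List.Forall₂.cons A3.2.1
      (List.Forall₂.cons A3.2.2 List.Forall₂.nil))
  · exact List.Forall₂.cons A4.1 (List.Forall₂.cons A4.2.1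
      (List.Forall₂.cons A4.2.2 List.Forall₂.nil))
  · exact List.Forall₂.cons A5.1 (List.Forall₂.cons A5.2.1
      (List.Forall₂.cons A5.2.2 List.Forall₂.nil))
  · exact List.Forall₂.cons B1 (List.Forall₂.cons B2 (List.Forall₂.cons P1
      (List.Forall₂.cons P2 (List.Forall₂.cons OUT List.Forall₂.nil))))
/-! ### Mirror symmetry -/

/-- Swapping the two coordinates. -/
def σp (p : ESp 2) : ESp 2 := pt (p 1) (p 0)

@[simp] lemma σσ (p : ESp 2) : σp (σp p) = p := by
  rw [σp, σp]; simp; exact (ptext p).symm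

lemma σ_pt (a b : ℝ) : σp (pt a b) = pt b a := rfl

lemma inner_σ (c x : ESp 2) : ⟪σp c, x⟫ = ⟪c, σp x⟫ := by
  rw [inner2, inner2]; simp [σp]; ring

lemma σ_ne {c : ESp 2} (hc : c ≠ 0) : σp c ≠ 0 := by
  intro h
  apply hc
  rw [← σσ c, h, σp, zero_eq_pt]
  simp

lemma Qσ {q : ESp 2} (hq : q ∈ Qsq) : σp q ∈ Qsq := by
  intro i; fin_cases i
  · exact hq 1
  · exact hq 0

lemma lawrence_σ {R R' : Set (ESp 2)} {φ : ESp 2 → ESp 2}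
    (hL : LawrenceEquivConfig R R' φ) :
    LawrenceEquivConfig (σp '' R) (σp '' R') (σp ∘ φ ∘ σp) := by
  obtain ⟨hbij, hsep⟩ := hL
  constructor
  · refine ⟨?_, ?_, ?_⟩
    · rintro x ⟨y, hy, rfl⟩
      exact ⟨φ y, hbij.mapsTo hy, by simp [Function.comp]⟩
    · rintro x ⟨y, hy, rfl⟩ z ⟨w, hw, rfl⟩ h
      simp only [Function.comp, σσ] at h
      have := hbij.injOn hy hw (by
        have := congrArg σp h
        simpa using this)
      rw [this]
    · rintro z ⟨w, hw, rfl⟩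
      obtain ⟨y, hy, hyw⟩ := hbij.surjOn hw
      exact ⟨σp y, ⟨y, hy, rfl⟩, by simp [Function.comp, σσ, hyw]⟩
  · intro c α hc
    obtain ⟨c₁, α₁, hc₁, h1, h2⟩ := hsep (σp c) α (σ_ne hc)
    refine ⟨σp c₁, α₁, σ_ne hc₁, ?_, ?_⟩
    · ext z
      constructor
      · rintro ⟨x, ⟨⟨y, hyR, rfl⟩, hx⟩, rfl⟩
        simp only [Set.mem_setOf_eq] at hx
        rw [← inner_σ] at hx
        have : φ y ∈ φ '' (R ∩ {x | α < ⟪σp c, x⟫}) := ⟨y, ⟨hyR, hx⟩, rfl⟩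
        rw [h1] at this
        refine ⟨⟨φ y, this.1, by simp [Function.comp, σσ]⟩, ?_⟩
        simp only [Function.comp, σσ, Set.mem_setOf_eq]
        rw [inner_σ, σσ]
        exact this.2
      · rintro ⟨⟨w, hw, rfl⟩, hz⟩
        simp only [Set.mem_setOf_eq] at hz
        rw [inner_σ, σσ] at hz
        have : w ∈ R' ∩ {x | α₁ < ⟪c₁, x⟫} := ⟨hw, hz⟩
        rw [← h1] at this
        obtain ⟨y, ⟨hy, hy2⟩, rfl⟩ := this
        refine ⟨σp y, ⟨⟨y, hy, rfl⟩, ?_⟩, by simp [Function.comp, σσ]⟩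
        simp only [Set.mem_setOf_eq] at hy2 ⊢
        rw [← inner_σ]
        exact hy2
      -- (unreachable)
    · ext z
      constructor
      · rintro ⟨x, ⟨⟨y, hyR, rfl⟩, hx⟩, rfl⟩
        simp only [Set.mem_setOf_eq] at hx
        rw [← inner_σ] at hx
        have : φ y ∈ φ '' (R ∩ {x | ⟪σp c, x⟫ < α}) := ⟨y, ⟨hyR, hx⟩, rfl⟩
        rw [h2] at this
        refine ⟨⟨φ y, this.1, by simp [Function.comp, σσ]⟩, ?_⟩
        simp only [Function.comp, σσ, Set.mem_setOf_eq]
        rw [inner_σ, σσ]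
        exact this.2
      · rintro ⟨⟨w, hw, rfl⟩, hz⟩
        simp only [Set.mem_setOf_eq] at hz
        rw [inner_σ, σσ] at hz
        have : w ∈ R' ∩ {x | ⟪c₁, x⟫ < α₁} := ⟨hw, hz⟩
        rw [← h2] at this
        obtain ⟨y, ⟨hy, hy2⟩, rfl⟩ := this
        refine ⟨σp y, ⟨⟨y, hy, rfl⟩, ?_⟩, by simp [Function.comp, σσ]⟩
        simp only [Set.mem_setOf_eq] at hy2 ⊢
        rw [← inner_σ]
        exact hy2

/-- Reflecting a forced value from the `y`-axis to the `x`-axis. -/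
lemma fd_reflX {R R' : Set (ESp 2)} {φ : ESp 2 → ESp 2}
    (hL : LawrenceEquivConfig R R' φ) (hQ : Qsq ⊆ R) (hfix : ∀ q ∈ Qsq, φ q = q)
    {w w' : ℝ} (hw : Fd R φ (pt 0 w) (pt 0 w'))
    (hm : ∀ p ∈ mulList 1 w, σp p ∈ R) (hmw : pt w 0 ∈ R) :
    Fd R φ (pt w 0) (pt w' 0) ∧
      List.Forall₂ (fun p q => φ (σp p) = σp q) (mulList 1 w) (mulList 1 w') := by
  have hL' := lawrence_σ hL
  have hQ' : Qsq ⊆ σp '' R := fun q hq => ⟨σp q, hQ (Qσ hq), σσ q⟩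
  have hfix' : ∀ q ∈ Qsq, (σp ∘ φ ∘ σp) q = q := by
    intro q hq
    simp only [Function.comp]
    rw [hfix _ (Qσ hq), σσ]
  have fd1 : Fd (σp '' R) (σp ∘ φ ∘ σp) (pt 1 0) (pt 1 0) := by
    constructor
    · exact ⟨pt 0 1, hQ (ptQ (Or.inl rfl) (Or.inr (Or.inl rfl))), rfl⟩
    · show σp (φ (σp (pt 1 0))) = pt 1 0
      rw [show σp (pt 1 0) = pt 0 1 from rfl,
        hfix _ (ptQ (Or.inl rfl) (Or.inr (Or.inl rfl)))]
      rfl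
  have fdw : Fd (σp '' R) (σp ∘ φ ∘ σp) (pt w 0) (pt w' 0) := by
    constructor
    · exact ⟨pt 0 w, hw.1, rfl⟩
    · show σp (φ (σp (pt w 0))) = pt w' 0
      rw [show σp (pt w 0) = pt 0 w from rfl, hw.2]
      rfl
  have hm' : ∀ p ∈ mulList 1 w, p ∈ σp '' R := fun p hp => ⟨σp p, hm p hp, σσ p⟩
  have outF := fd_mul hL' hQ' hfix' fd1 fdw hm'
  have out := outF.1
  refine ⟨⟨hmw, ?_⟩, ?_⟩
  swap
  · refine outF.2.imp ?_
    intro p q hpq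
    have h2 := hpq.2
    have h3 := congrArg σp h2
    simpa [Function.comp] using h3
  · have h2 := out.2
    have h3 : φ (σp (pt 0 (1*w))) = σp (pt 0 (1*w')) := by
      have := congrArg σp h2
      simpa [Function.comp] using this
    rw [σ_pt] at h3
    rw [show σp (pt 0 (1*w')) = pt (1*w') 0 from rfl] at h3
    rw [show (1:ℝ)*w = w by ring, show (1:ℝ)*w' = w' by ring] at h3
    exact h3
/-! ### Integer points -/

/-- Chains constructing the natural number points on the `x`-axis. -/
def natList : ℕ → List (ESp 2)
  | 0 => []
  | n+1 => subList (-1) (n : ℝ) ++ natList n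

lemma natFd {R R' : Set (ESp 2)} {φ : ESp 2 → ESp 2}
    (hL : LawrenceEquivConfig R R' φ) (hQ : Qsq ⊆ R) (hfix : ∀ q ∈ Qsq, φ q = q)
    (hm1 : ∀ p ∈ subList 1 0, p ∈ R) :
    ∀ n : ℕ, (∀ p ∈ natList n, p ∈ R) → Fd R φ (pt (n : ℝ) 0) (pt (n : ℝ) 0) := by
  have g00 := fd_grid hQ hfix (Or.inl rfl) (Or.inl rfl)
  have g10 := fd_grid hQ hfix (Or.inr (Or.inl rfl)) (Or.inl rfl)
  have A1 := fd_sub hL hQ hfix g10 g00 (hm1 _ (by simp [subList]))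
    (hm1 _ (by simp [subList])) (hm1 _ (by simp [subList]))
  have fdm1 : Fd R φ (pt (-1) 0) (pt (-1) 0) :=
    fd_congr A1.2.2 (by rw [show (0:ℝ)-1 = -1 by ring]) (by rw [show (0:ℝ)-1 = -1 by ring])
  intro n
  induction n with
  | zero =>
    intro _
    exact fd_congr g00 (by norm_num) (by norm_num)
  | succ n IH =>
    intro hm
    have hm' : ∀ p ∈ natList n, p ∈ R := fun p hp =>
      hm p (by unfold natList; simp [hp])
    have hmc : ∀ p ∈ subList (-1) (n : ℝ), p ∈ R := fun p hp =>
      hm p (by unfold natList; simp [hp])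
    have S := fd_sub hL hQ hfix fdm1 (IH hm') (hmc _ (by simp [subList]))
      (hmc _ (by simp [subList])) (hmc _ (by simp [subList]))
    refine fd_congr S.2.2 ?_ ?_ <;>
      · rw [show ((n:ℝ) - (-1)) = ((n+1 : ℕ) : ℝ) by push_cast; ring]

/-- Chains constructing the integer points on the `x`-axis. -/
def intList (m : ℤ) : List (ESp 2) :=
  subList 1 0 ++ natList m.natAbs ++ subList ((m.natAbs : ℕ) : ℝ) 0

lemma intFd {R R' : Set (ESp 2)} {φ : ESp 2 → ESp 2}
    (hL : LawrenceEquivConfig R R' φ) (hQ : Qsq ⊆ R) (hfix : ∀ q ∈ Qsq, φ q = q)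
    (m : ℤ) (hm : ∀ p ∈ intList m, p ∈ R) :
    Fd R φ (pt (m : ℝ) 0) (pt (m : ℝ) 0) := by
  have g00 := fd_grid hQ hfix (Or.inl rfl) (Or.inl rfl)
  have hm1 : ∀ p ∈ subList 1 0, p ∈ R := fun p hp =>
    hm p (by unfold intList; simp [hp])
  have hm2 : ∀ p ∈ natList m.natAbs, p ∈ R := fun p hp =>
    hm p (by unfold intList; simp [hp])
  have hm3 : ∀ p ∈ subList ((m.natAbs : ℕ) : ℝ) 0, p ∈ R := fun p hp =>
    hm p (by unfold intList; exact List.mem_append_right _ hp)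
  have fdn := natFd hL hQ hfix hm1 m.natAbs hm2
  rcases Int.natAbs_eq m with h | h
  · have hc : ((m : ℝ)) = ((m.natAbs : ℕ) : ℝ) := by
      have h2 := congrArg (Int.cast : ℤ → ℝ) h
      rwa [Int.cast_natCast] at h2
    exact fd_congr fdn (by rw [hc]) (by rw [hc])
  · have hc : ((m : ℝ)) = -((m.natAbs : ℕ) : ℝ) := by
      have h2 := congrArg (Int.cast : ℤ → ℝ) h
      rwa [Int.cast_neg, Int.cast_natCast] at h2
    have S := fd_sub hL hQ hfix fdn g00 (hm3 _ (by simp [subList]))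
      (hm3 _ (by simp [subList])) (hm3 _ (by simp [subList]))
    refine fd_congr S.2.2 ?_ ?_ <;>
      · rw [show (0 - ((m.natAbs : ℕ) : ℝ)) = (m:ℝ) by rw [hc]; ring]

lemma natFix {R R' : Set (ESp 2)} {φ : ESp 2 → ESp 2}
    (hL : LawrenceEquivConfig R R' φ) (hQ : Qsq ⊆ R) (hfix : ∀ q ∈ Qsq, φ q = q)
    (hm1 : ∀ p ∈ subList 1 0, p ∈ R) :
    ∀ n : ℕ, (∀ p ∈ natList n, p ∈ R) → ∀ p ∈ natList n, φ p = p := by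
  have g00 := fd_grid hQ hfix (Or.inl rfl) (Or.inl rfl)
  have g10 := fd_grid hQ hfix (Or.inr (Or.inl rfl)) (Or.inl rfl)
  have A1 := fd_sub hL hQ hfix g10 g00 (hm1 _ (by simp [subList]))
    (hm1 _ (by simp [subList])) (hm1 _ (by simp [subList]))
  have fdm1 : Fd R φ (pt (-1) 0) (pt (-1) 0) :=
    fd_congr A1.2.2 (by rw [show (0:ℝ)-1 = -1 by ring]) (by rw [show (0:ℝ)-1 = -1 by ring])
  intro n
  induction n with
  | zero => intro _ p hp; simp [natList] at hp
  | succ n IH =>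
    intro hm p hp
    have hm' : ∀ p ∈ natList n, p ∈ R := fun p hp =>
      hm p (by unfold natList; simp [hp])
    have hmc : ∀ p ∈ subList (-1) (n : ℝ), p ∈ R := fun p hp =>
      hm p (by unfold natList; simp [hp])
    have fdn := natFd hL hQ hfix hm1 n hm'
    have S := fd_sub hL hQ hfix fdm1 fdn (hmc _ (by simp [subList]))
      (hmc _ (by simp [subList])) (hmc _ (by simp [subList]))
    unfold natList at hp
    rw [List.mem_append] at hp
    rcases hp with hp | hp
    · simp only [subList, List.mem_cons, List.mem_singleton] at hp
      rcases hp with rfl | hp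
      · exact S.1.2
      · rcases hp with rfl | hp
        · exact S.2.1.2
        · simp at hp
          rw [hp, show ((n:ℝ)+1) = ((n:ℝ) - -1) by ring]
          exact S.2.2.2
    · exact IH hm' p hp

lemma intFix {R R' : Set (ESp 2)} {φ : ESp 2 → ESp 2}
    (hL : LawrenceEquivConfig R R' φ) (hQ : Qsq ⊆ R) (hfix : ∀ q ∈ Qsq, φ q = q)
    (m : ℤ) (hm : ∀ p ∈ intList m, p ∈ R) :
    ∀ p ∈ intList m, φ p = p := by
  have g00 := fd_grid hQ hfix (Or.inl rfl) (Or.inl rfl)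
  have g10 := fd_grid hQ hfix (Or.inr (Or.inl rfl)) (Or.inl rfl)
  have hm1 : ∀ p ∈ subList 1 0, p ∈ R := fun p hp =>
    hm p (by unfold intList; simp [hp])
  have hm2 : ∀ p ∈ natList m.natAbs, p ∈ R := fun p hp =>
    hm p (by unfold intList; simp [hp])
  have hm3 : ∀ p ∈ subList ((m.natAbs : ℕ) : ℝ) 0, p ∈ R := fun p hp =>
    hm p (by unfold intList; exact List.mem_append_right _ hp)
  have A1 := fd_sub hL hQ hfix g10 g00 (hm1 _ (by simp [subList]))
    (hm1 _ (by simp [subList])) (hm1 _ (by simp [subList]))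
  have fdn := natFd hL hQ hfix hm1 m.natAbs hm2
  have S := fd_sub hL hQ hfix fdn g00 (hm3 _ (by simp [subList]))
    (hm3 _ (by simp [subList])) (hm3 _ (by simp [subList]))
  intro p hp
  unfold intList at hp
  rw [List.mem_append, List.mem_append] at hp
  rcases hp with (hp | hp) | hp
  · simp only [subList, List.mem_cons, List.mem_singleton] at hp
    rcases hp with rfl | rfl | hp
    · exact A1.1.2
    · exact A1.2.1.2
    · simp at hp
      rw [hp, show (-1:ℝ) = (0 - 1:ℝ) by ring]
      exact A1.2.2.2
  · exact natFix hL hQ hfix hm1 m.natAbs hm2 p hp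
  · simp only [subList, List.mem_cons, List.mem_singleton] at hp
    rcases hp with rfl | rfl | hp
    · exact S.1.2
    · exact S.2.1.2
    · simp [-Nat.cast_natAbs] at hp
      rw [hp, show (-((m.natAbs:ℕ):ℝ)) = (0 - ((m.natAbs:ℕ):ℝ)) by ring]
      exact S.2.2.2
/-! ### The Horner induction -/

/-- Evaluation of an integer polynomial at a real number. -/
def ev (ψ : Polynomial ℤ) (t : ℝ) : ℝ := Polynomial.aeval t ψ

lemma ev_zero (t : ℝ) : ev 0 t = 0 := by simp [ev]

lemma ev_addC (p : Polynomial ℤ) (a : ℤ) (t : ℝ) :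
    ev (p + Polynomial.C a) t = ev p t + (a : ℝ) := by
  simp [ev]

lemma ev_mulX (p : Polynomial ℤ) (t : ℝ) : ev (p * Polynomial.X) t = ev p t * t := by
  simp [ev]

/-- A family of chains realizing the von Staudt construction of `ψ`. -/
def GoodChain (ψ : Polynomial ℤ) : Prop :=
  ∃ L : ℝ → List (ESp 2), ∀ t : ℝ,
    (pt (ev ψ t) 0) ∈ L t ∧
    ∀ (R R' : Set (ESp 2)) (φ : ESp 2 → ESp 2),
      LawrenceEquivConfig R R' φ → Qsq ⊆ R → (∀ p ∈ L t, p ∈ R) → pt t 0 ∈ R →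
      (∀ q ∈ Qsq, φ q = q) → ∀ t', φ (pt t 0) = pt t' 0 →
      List.Forall₂ (fun p q => φ p = q) (L t) (L t') ∧
      φ (pt (ev ψ t) 0) = pt (ev ψ t') 0

lemma goodChain (ψ : Polynomial ℤ) : GoodChain ψ := by
  induction ψ using Polynomial.recOnHorner with
  | M0 =>
    refine ⟨fun _ => [pt 0 0], fun t => ⟨?_, ?_⟩⟩
    · simp [ev_zero]
    · intro R R' φ hL hQ hm htR hfix t' ht'
      have g00 := fd_grid hQ hfix (Or.inl rfl) (Or.inl rfl)
      constructor
      · exact List.Forall₂.cons g00.2 List.Forall₂.nil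
      · rw [ev_zero, ev_zero]; exact g00.2
  | MC p a hp0 ha IH =>
    obtain ⟨L, hLp⟩ := IH
    refine ⟨fun t => pt (ev (p + Polynomial.C a) t) 0 ::
      (intList (-a) ++ subList (-(a:ℝ)) (ev p t) ++ L t), fun t => ⟨by simp, ?_⟩⟩
    intro R R' φ hL hQ hm htR hfix t' ht'
    have hmL : ∀ q ∈ L t, q ∈ R := fun q hq => hm q (by simp [hq])
    have hmI : ∀ q ∈ intList (-a), q ∈ R := fun q hq => hm q (by simp [hq])
    have hmS : ∀ q ∈ subList (-(a:ℝ)) (ev p t), q ∈ R := fun q hq => hm q (by simp [hq])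
    obtain ⟨IHf2, IHout⟩ := (hLp t).2 R R' φ hL hQ hmL htR hfix t' ht'
    have fdev : Fd R φ (pt (ev p t) 0) (pt (ev p t') 0) := ⟨hmL _ (hLp t).1, IHout⟩
    have hci : (((-a : ℤ)) : ℝ) = -(a:ℝ) := by push_cast; ring
    have fdint : Fd R φ (pt (-(a:ℝ)) 0) (pt (-(a:ℝ)) 0) :=
      fd_congr (intFd hL hQ hfix (-a) hmI) (by rw [hci]) (by rw [hci])
    have S := fd_sub hL hQ hfix fdint fdev (hmS _ (by simp [subList]))
      (hmS _ (by simp [subList])) (hmS _ (by simp [subList]))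
    have hout : φ (pt (ev (p + Polynomial.C a) t) 0) = pt (ev (p + Polynomial.C a) t') 0 := by
      have := S.2.2.2
      rw [show (ev p t - -(a:ℝ)) = ev (p + Polynomial.C a) t by rw [ev_addC]; ring,
        show (ev p t' - -(a:ℝ)) = ev (p + Polynomial.C a) t' by rw [ev_addC]; ring] at this
      exact this
    refine ⟨?_, hout⟩
    refine List.Forall₂.cons hout ?_
    refine List.rel_append (List.rel_append ?_ ?_) IHf2
    · exact List.forall₂_same.2 (intFix hL hQ hfix (-a) hmI)
    · exact (sub_f2 hL hQ hfix fdint fdev (hmS _ (by simp [subList]))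
        (hmS _ (by simp [subList])) (hmS _ (by simp [subList]))).imp (fun _ _ h => h.2)
  | MX p hp IH =>
    obtain ⟨L, hLp⟩ := IH
    refine ⟨fun t => pt (ev (p * Polynomial.X) t) 0 ::
      (mulList (ev p t) t ++ List.map σp (mulList 1 (ev p t * t)) ++ L t),
      fun t => ⟨by simp, ?_⟩⟩
    intro R R' φ hL hQ hm htR hfix t' ht'
    have hmL : ∀ q ∈ L t, q ∈ R := fun q hq => hm q (by simp [hq])
    have hmM : ∀ q ∈ mulList (ev p t) t, q ∈ R := fun q hq => hm q (by simp [hq])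
    have hmσ : ∀ q ∈ mulList 1 (ev p t * t), σp q ∈ R := by
      intro q hq
      apply hm
      simp only [List.mem_cons, List.mem_append, List.mem_map]
      exact Or.inr (Or.inl (Or.inr ⟨q, hq, rfl⟩))
    obtain ⟨IHf2, IHout⟩ := (hLp t).2 R R' φ hL hQ hmL htR hfix t' ht'
    have fdev : Fd R φ (pt (ev p t) 0) (pt (ev p t') 0) := ⟨hmL _ (hLp t).1, IHout⟩
    have fdt : Fd R φ (pt t 0) (pt t' 0) := ⟨htR, ht'⟩
    have M := fd_mul hL hQ hfix fdev fdt hmM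
    have hmw : pt (ev p t * t) 0 ∈ R := by
      have : pt (ev (p * Polynomial.X) t) 0 ∈ R := hm _ (by simp)
      rwa [ev_mulX] at this
    have REF := fd_reflX hL hQ hfix M.1 hmσ hmw
    have hout : φ (pt (ev (p * Polynomial.X) t) 0) = pt (ev (p * Polynomial.X) t') 0 := by
      have := REF.1.2
      rw [show (ev p t * t) = ev (p * Polynomial.X) t from (ev_mulX p t).symm,
        show (ev p t' * t') = ev (p * Polynomial.X) t' from (ev_mulX p t').symm] at this
      exact this
    refine ⟨?_, hout⟩
    refine List.Forall₂.cons hout ?_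
    refine List.rel_append (List.rel_append (M.2.imp (fun _ _ h => h.2)) ?_) IHf2
    rw [List.forall₂_map_left_iff, List.forall₂_map_right_iff]
    exact REF.2
/-- **Von Staudt constructions.** Every integer-coefficient polynomial is realized by a
functional arrangement. -/
theorem polynomial_functional_arrangement (ψ : Polynomial ℤ) :
    ∃ F : (Fin 1 → ℝ) → Set (ESp 2),
      IsFunctionalArrangement (fun x => Polynomial.aeval (x 0) ψ) F := by
  obtain ⟨L, hLp⟩ := goodChain ψ
  refine ⟨fun x => Qsq ∪ {pt (x 0) 0} ∪ {q | q ∈ L (x 0)}, ?_⟩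
  intro x
  set t : ℝ := x 0 with hxt
  have hxi : ∀ i : Fin 1, x i = t := fun i => by fin_cases i; rfl
  have hfev : (fun x : Fin 1 → ℝ => Polynomial.aeval (x 0) ψ) x = ev ψ t := rfl
  have hQsub : Qsq ⊆ Qsq ∪ {pt t 0} ∪ {q | q ∈ L t} :=
    fun q hq => Set.mem_union_left _ (Set.mem_union_left _ hq)
  have htmem : pt t 0 ∈ Qsq ∪ {pt t 0} ∪ {q | q ∈ L t} :=
    Set.mem_union_left _ (Set.mem_union_right _ rfl)
  have hmL : ∀ p ∈ L t, p ∈ Qsq ∪ {pt t 0} ∪ {q | q ∈ L t} :=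
    fun p hp => Set.mem_union_right _ hp
  refine ⟨?_, ?_, ?_, hQsub, ?_, ?_⟩
  · exact Set.Finite.union (Set.Finite.union Qsq_finite (Set.finite_singleton _))
      (List.finite_toSet _)
  · rw [hfev, smul_e1_eq]
    exact hmL _ (hLp t).1
  · intro i
    rw [hxi i, smul_e1_eq]
    exact htmem
  · -- FramedBy
    constructor
    · rintro p (⟨i, rfl⟩ | hq)
      · rw [hxi i, smul_e1_eq]; exact htmem
      · exact hQsub hq
    · intro R' φ hL hfixQ
      have hfix : ∀ q ∈ Qsq, φ q = q := fun q hq => hfixQ q (Or.inr hq)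
      have htfix : φ (pt t 0) = pt t 0 := by
        have := hfixQ (x 0 • e1) (Or.inl ⟨0, rfl⟩)
        rwa [smul_e1_eq] at this
      obtain ⟨F2, -⟩ := (hLp t).2 _ R' φ hL hQsub hmL htmem hfix t htfix
      rintro z ((hz | hz) | hz)
      · exact hfix z hz
      · rw [hz]; exact htfix
      · exact (List.forall₂_same.1 F2) z hz
  · -- condition (iii)
    intro R' φ hL hfix hout
    have h00 : pt 0 0 ∈ Qsq ∪ {pt t 0} ∪ {q | q ∈ L t} :=
      hQsub (ptQ (Or.inl rfl) (Or.inl rfl))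
    have h10 : pt 1 0 ∈ Qsq ∪ {pt t 0} ∪ {q | q ∈ L t} :=
      hQsub (ptQ (Or.inr (Or.inl rfl)) (Or.inl rfl))
    have W := lineW hL h00 h10 (pt_ne_fst (by norm_num))
    have hcol := W.1 (pt t 0) htmem (colpt.2 (by ring))
    rw [hfix _ (ptQ (Or.inl rfl) (Or.inl rfl)),
      hfix _ (ptQ (Or.inr (Or.inl rfl)) (Or.inl rfl))] at hcol
    have h1 : (φ (pt t 0)) 1 = 0 := by
      unfold col at hcol
      simp only [pt_zero, pt_one] at hcol
      linarith
    set t' : ℝ := (φ (pt t 0)) 0 with ht'd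
    have heq : φ (pt t 0) = pt t' 0 := by
      rw [ptext (φ (pt t 0)), h1]
    obtain ⟨-, houts⟩ := (hLp t).2 _ R' φ hL hQsub hmL htmem hfix t' heq
    rw [hfev, smul_e1_eq] at hout
    rw [hout] at houts
    have hev : ev ψ t' = ev ψ t := ((pt_inj houts).1).symm
    refine ⟨fun _ => t', ?_, ?_⟩
    · exact hev
    · intro i
      rw [hxi i, smul_e1_eq, smul_e1_eq]
      exact heq
end
end

section
/- Let d ≥ 1, let 0 ≤ ε ≤ 1/36, and let P and P' be nonempty polytopes in ℝ^d such that every vertex of P is a vertex of P' and d_H(P, B₁(0)) ≤ ε. Then d_H(P', B₁(0)) ≤ 6√ε. -/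
open scoped RealInnerProductSpace

noncomputable section

/-- Separation lemma: if every point of the unit ball is within `ε` of the closed convex
set `P`, then the ball of radius `1 - ε` is contained in `P`. -/
lemma aux_ball_subset {d : ℕ} (ε : ℝ) (hε0 : 0 ≤ ε) (hε1 : ε ≤ 1)
    (P : Set (ESp d)) (hPc : IsCompact P) (hconv : Convex ℝ P) (hPne : P.Nonempty)
    (hd : ∀ z ∈ Metric.closedBall (0 : ESp d) 1, Metric.infDist z P ≤ ε) :
    Metric.closedBall (0 : ESp d) (1 - ε) ⊆ P := by
  intro y hy
  by_contra hyP
  obtain ⟨v, hvP, hv⟩ := exists_norm_eq_iInf_of_complete_convex hPne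
    hPc.isClosed.isComplete hconv y
  have hproj : ∀ w ∈ P, ⟪y - v, w - v⟫ ≤ 0 :=
    (norm_eq_iInf_iff_real_inner_le_zero hconv hvP).1 hv
  have hyv : y ≠ v := fun h => hyP (h ▸ hvP)
  set δ : ℝ := ‖y - v‖ with hδ
  have hδ0 : 0 < δ := by
    rw [hδ, norm_pos_iff]
    exact sub_ne_zero.2 hyv
  set c : ESp d := δ⁻¹ • (y - v) with hc
  have hcnorm : ‖c‖ = 1 := by
    rw [hc, norm_smul, norm_inv, Real.norm_eq_abs, abs_of_pos hδ0, ← hδ,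
      inv_mul_cancel₀ hδ0.ne']
  set z : ESp d := y + ε • c with hz
  have hzB : z ∈ Metric.closedBall (0 : ESp d) 1 := by
    rw [Metric.mem_closedBall, dist_zero_right]
    calc ‖y + ε • c‖ ≤ ‖y‖ + ‖ε • c‖ := norm_add_le _ _
      _ ≤ (1 - ε) + ε := by
          gcongr
          · rw [← dist_zero_right]
            exact Metric.mem_closedBall.1 hy
          · rw [norm_smul, Real.norm_eq_abs, abs_of_nonneg hε0, hcnorm, mul_one]
      _ = 1 := by ring
  have hkey : ∀ q ∈ P, δ + ε ≤ dist z q := by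
    intro q hq
    have h1 : ⟪c, z - q⟫ ≤ ‖z - q‖ := by
      calc ⟪c, z - q⟫ ≤ ‖c‖ * ‖z - q‖ := real_inner_le_norm _ _
        _ = ‖z - q‖ := by rw [hcnorm, one_mul]
    have hq0 : 0 ≤ ⟪y - v, v - q⟫ := by
      have h := hproj q hq
      have h3 : ⟪y - v, v - q⟫ = -⟪y - v, q - v⟫ := by
        rw [← inner_neg_right]; congr 1; abel
      rw [h3]; linarith
    have h2 : δ + ε ≤ ⟪c, z - q⟫ := by
      have hzq : z - q = (1 + ε * δ⁻¹) • (y - v) + (v - q) := by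
        rw [hz, hc, add_smul, one_smul, smul_smul]; abel
      rw [hc, hzq, inner_add_right, real_inner_smul_left, real_inner_smul_left,
        real_inner_smul_right, real_inner_self_eq_norm_sq, ← hδ]
      have hδne : δ ≠ 0 := ne_of_gt hδ0
      have h9 : δ⁻¹ * δ = 1 := inv_mul_cancel₀ hδne
      have expand : δ⁻¹ * ((1 + ε * δ⁻¹) * δ ^ 2) = δ + ε := by
        linear_combination (δ + ε * (δ⁻¹ * δ + 1)) * h9
      nlinarith [mul_nonneg (inv_nonneg.2 hδ0.le) hq0]
    calc δ + ε ≤ ⟪c, z - q⟫ := h2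
      _ ≤ ‖z - q‖ := h1
      _ = dist z q := (dist_eq_norm _ _).symm
  obtain ⟨q, hqP, hzq⟩ := hPc.exists_infDist_eq_dist hPne z
  have h6 := hd z hzB
  have h7 := hkey q hqP
  rw [← hzq] at h7
  linarith

set_option maxHeartbeats 1000000 in
/-- Any point of `P'` has norm at most `1 + 6√ε`. -/
lemma aux_main {d : ℕ} (ε : ℝ) (hεpos : 0 < ε) (hε : ε ≤ 1 / 36)
    (P P' : Set (ESp d)) (hP : IsPolytope P) (hP' : IsPolytope P')
    (hPne : P.Nonempty) (hP'ne : P'.Nonempty)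
    (hsub : verts P ⊆ verts P')
    (hdist : Metric.hausdorffDist P (Metric.closedBall 0 1) ≤ ε) :
    Metric.hausdorffDist P' (Metric.closedBall 0 1) ≤ 6 * Real.sqrt ε := by
  classical
  have hε0 : (0 : ℝ) ≤ ε := hεpos.le
  obtain ⟨V, hV⟩ := hP
  obtain ⟨V', hV'⟩ := hP'
  have hPcomp : IsCompact P := hV ▸ V.finite_toSet.isCompact_convexHull ℝ
  have hPconv : Convex ℝ P := hV ▸ convex_convexHull ℝ _
  have hP'conv : Convex ℝ P' := hV' ▸ convex_convexHull ℝ _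
  have hP'comp : IsCompact P' := hV' ▸ V'.finite_toSet.isCompact_convexHull ℝ
  have hBne : (Metric.closedBall (0 : ESp d) 1).Nonempty :=
    ⟨0, by simp⟩
  have hBcomp : IsCompact (Metric.closedBall (0 : ESp d) 1) :=
    isCompact_closedBall _ _
  have hne_top : EMetric.hausdorffEdist P (Metric.closedBall (0 : ESp d) 1) ≠ ⊤ :=
    Metric.hausdorffEdist_ne_top_of_nonempty_of_bounded hPne hBne
      hPcomp.isBounded hBcomp.isBounded
  -- P is inside the ball of radius 1+ε
  have hPsub : ∀ x ∈ P, ‖x‖ ≤ 1 + ε := by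
    intro x hx
    have h1 : Metric.infDist x (Metric.closedBall (0 : ESp d) 1) ≤ ε :=
      le_trans (Metric.infDist_le_hausdorffDist_of_mem hx hne_top) hdist
    obtain ⟨y, hyB, hxy⟩ := hBcomp.exists_infDist_eq_dist hBne x
    have hynorm : ‖y‖ ≤ 1 := by
      rw [← dist_zero_right]; exact Metric.mem_closedBall.1 hyB
    calc ‖x‖ ≤ ‖y‖ + dist x y := by
          rw [dist_eq_norm]
          have : x = (x - y) + y := by abel
          calc ‖x‖ = ‖(x - y) + y‖ := by rw [← this]
            _ ≤ ‖x - y‖ + ‖y‖ := norm_add_le _ _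
            _ = ‖y‖ + ‖x - y‖ := by ring
      _ ≤ 1 + ε := by rw [← hxy]; exact add_le_add hynorm h1
  -- the ball of radius 1-ε is inside P
  have hBsubP : Metric.closedBall (0 : ESp d) (1 - ε) ⊆ P := by
    refine aux_ball_subset ε hε0 (by linarith) P hPcomp hPconv hPne ?_
    intro z hz
    have h : Metric.infDist z P ≤
        Metric.hausdorffDist (Metric.closedBall (0 : ESp d) 1) P :=
      Metric.infDist_le_hausdorffDist_of_mem hz (by rwa [EMetric.hausdorffEdist_comm])
    rw [Metric.hausdorffDist_comm] at h
    exact h.trans hdist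
  -- Krein-Milman : P is the hull of its vertices
  have hvfin : (verts P).Finite := by
    apply V.finite_toSet.subset
    have : verts P ⊆ (V : Set (ESp d)) := by
      intro x hx
      exact extremePoints_convexHull_subset (hV ▸ hx)
    exact this
  have hKM : P = convexHull ℝ (verts P) := by
    have hclosed : IsClosed (convexHull ℝ (verts P)) :=
      (hvfin.isCompact_convexHull ℝ).isClosed
    have h := closure_convexHull_extremePoints hPcomp hPconv
    conv_lhs => rw [← h]
    exact hclosed.closure_eq
  have hPP' : P ⊆ P' := by
    rw [hKM]
    exact convexHull_min (fun x hx => extremePoints_subset (hsub hx)) hP'conv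
  -- abbreviations
  set s : ℝ := Real.sqrt ε with hsdef
  clear_value s
  have hs0 : 0 < s := hsdef ▸ Real.sqrt_pos.2 hεpos
  have hεs : ε = s ^ 2 := by rw [hsdef]; exact (Real.sq_sqrt hε0).symm
  have hs6 : s ≤ 1 / 6 := by nlinarith [hεs, hε, hs0]
  -- main claim : P' is inside the ball of radius 1 + 6s
  have hclaim : ∀ v ∈ P', ‖v‖ ≤ 1 + 6 * s := by
    intro v hv
    by_contra hvn
    push_neg at hvn
    set R : ℝ := ‖v‖ with hR
    clear_value R
    have hR0 : 0 < R := by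
      have : (0 : ℝ) < 1 + 6 * s := by linarith
      linarith
    obtain ⟨u, hunorm, hvu⟩ : ∃ u : ESp d, ‖u‖ = 1 ∧ v = R • u := by
      refine ⟨R⁻¹ • v, ?_, ?_⟩
      · rw [norm_smul, norm_inv, Real.norm_eq_abs, abs_of_pos hR0, ← hR,
          inv_mul_cancel₀ hR0.ne']
      · rw [smul_smul, mul_inv_cancel₀ hR0.ne', one_smul]
    -- find a vertex w of P with ⟪u, w⟫ ≥ 1 - ε
    have huB : u ∈ Metric.closedBall (0 : ESp d) 1 := by
      rw [Metric.mem_closedBall, dist_zero_right, hunorm]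
    have h1 : Metric.infDist u P ≤ ε := by
      have h : Metric.infDist u P ≤
          Metric.hausdorffDist (Metric.closedBall (0 : ESp d) 1) P :=
        Metric.infDist_le_hausdorffDist_of_mem huB (by rwa [EMetric.hausdorffEdist_comm])
      rw [Metric.hausdorffDist_comm] at h
      exact le_trans h hdist
    obtain ⟨p, hpP, hup⟩ := hPcomp.exists_infDist_eq_dist hPne u
    have hp1 : 1 - ε ≤ ⟪u, p⟫ := by
      have h2 : ⟪u, u - p⟫ ≤ ‖u - p‖ := by
        calc ⟪u, u - p⟫ ≤ ‖u‖ * ‖u - p‖ := real_inner_le_norm _ _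
          _ = ‖u - p‖ := by rw [hunorm, one_mul]
      have h3 : ‖u - p‖ ≤ ε := by
        rw [← dist_eq_norm, ← hup]; exact h1
      have h4 : ⟪u, u - p⟫ = 1 - ⟪u, p⟫ := by
        rw [inner_sub_right, real_inner_self_eq_norm_sq, hunorm]; ring
      linarith
    have hconvOn : ConvexOn ℝ Set.univ (fun x : ESp d => ⟪u, x⟫) := by
      refine ⟨convex_univ, ?_⟩
      intro x _ y _ b c hb hc hbc
      simp only [inner_add_right, real_inner_smul_right, smul_eq_mul]
      exact le_rfl
    obtain ⟨w, hw, hpw⟩ := hconvOn.exists_ge_of_mem_convexHull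
      (Set.subset_univ _) (hKM ▸ hpP)
    have hwP' : w ∈ Set.extremePoints ℝ P' := hsub hw
    have hwP : w ∈ P := extremePoints_subset hw
    have hwnorm : ‖w‖ ≤ 1 + ε := hPsub w hwP
    set a : ℝ := ⟪u, w⟫ with ha
    clear_value a
    have ha1 : 1 - ε ≤ a := le_trans hp1 hpw
    have ha2 : a ≤ 1 + ε := by
      have h := real_inner_le_norm u w
      rw [hunorm, one_mul] at h
      rw [ha]
      linarith
    have hRa : 5 * s ≤ R - a := by
      nlinarith [mul_nonneg hs0.le hs0.le, hs6, hs0.le]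
    set t : ℝ := s / (R - a) with ht
    clear_value t
    have ht0 : 0 < t := by
      rw [ht]; exact div_pos hs0 (by linarith)
    have hts : t * (R - a) = s := by
      rw [ht]; exact div_mul_cancel₀ _ (ne_of_gt (by linarith : (0:ℝ) < R - a))
    have ht5 : t ≤ 1 / 5 := by
      rw [ht, div_le_iff₀ (by linarith : (0:ℝ) < R - a)]
      linarith
    set x : ESp d := w + t • (w - v) with hx
    clear_value x
    -- orthogonal decomposition of x
    have horth : ⟪u, w - a • u⟫ = 0 := by
      rw [inner_sub_right, real_inner_smul_right, real_inner_self_eq_norm_sq, hunorm, ← ha]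
      ring
    have hxdec : x = (a - s) • u + (1 + t) • (w - a • u) := by
      rw [hx, hvu, show (a : ℝ) - s = a - t * (R - a) from by rw [hts]]
      match_scalars <;> ring
    have hnormx : ‖x‖ ^ 2 = (a - s) ^ 2 + (1 + t) ^ 2 * ‖w - a • u‖ ^ 2 := by
      rw [hxdec, norm_add_sq_real, real_inner_smul_left, real_inner_smul_right, horth]
      simp only [norm_smul, hunorm, Real.norm_eq_abs, mul_one, mul_pow, sq_abs]
      ring
    have hp2 : ‖w - a • u‖ ^ 2 = ‖w‖ ^ 2 - a ^ 2 := by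
      rw [norm_sub_sq_real, real_inner_smul_right, norm_smul,
        Real.norm_eq_abs, hunorm, mul_one, sq_abs]
      rw [show ⟪w, u⟫ = a from by rw [ha, real_inner_comm]]
      ring
    have hp2le : ‖w - a • u‖ ^ 2 ≤ 4 * ε := by
      rw [hp2]
      nlinarith [hwnorm, ha1, norm_nonneg w]
    have hxle : ‖x‖ ≤ 1 - ε := by
      have h2 : ‖x‖ ^ 2 ≤ (1 - ε) ^ 2 := by
        rw [hnormx]
        have hb1 : (a - s) ^ 2 ≤ (1 + ε - s) ^ 2 := by
          have h01 : (0:ℝ) ≤ a - s := by linarith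
          have h02 : a - s ≤ 1 + ε - s := by linarith
          exact pow_le_pow_left₀ h01 h02 2
        have hb2 : (1 + t) ^ 2 ≤ (6 / 5 : ℝ) ^ 2 := by
          have h01 : (0:ℝ) ≤ 1 + t := by linarith
          have h02 : 1 + t ≤ 6 / 5 := by linarith
          exact pow_le_pow_left₀ h01 h02 2
        have hb3 : (1 + t) ^ 2 * ‖w - a • u‖ ^ 2 ≤ (6 / 5 : ℝ) ^ 2 * (4 * ε) := by
          apply mul_le_mul hb2 hp2le (sq_nonneg _) (by positivity)
        have hb4 : (1 + ε - s) ^ 2 + (6 / 5 : ℝ) ^ 2 * (4 * ε) ≤ (1 - ε) ^ 2 := by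
          nlinarith [hεs, hs6, hs0.le, mul_nonneg hs0.le hs0.le,
            mul_nonneg (mul_nonneg hs0.le hs0.le) hs0.le]
        linarith
      nlinarith [norm_nonneg x]
    have hxP' : x ∈ P' := by
      apply hPP'
      apply hBsubP
      rw [Metric.mem_closedBall, dist_zero_right]
      exact hxle
    have hseg : w ∈ openSegment ℝ x v := by
      refine ⟨1 / (1 + t), t / (1 + t), by positivity, by positivity, ?_, ?_⟩
      · field_simp
      · rw [hx]
        rw [smul_add, smul_smul, smul_sub]
        have h8 : (1 / (1 + t)) * t = t / (1 + t) := by ring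
        rw [h8]
        have h9 : (1 + t : ℝ) ≠ 0 := by positivity
        rw [show (1 / (1 + t) : ℝ) • w + ((t / (1 + t)) • w - (t / (1 + t)) • v)
            + (t / (1 + t)) • v = (1 / (1 + t) + t / (1 + t)) • w by
          rw [add_smul]; abel]
        rw [show (1 / (1 + t) + t / (1 + t) : ℝ) = 1 by field_simp, one_smul]
    obtain ⟨-, hvw⟩ := (mem_extremePoints.1 hwP').2 _ hxP' _ hv hseg
    have haR : a = R := by
      rw [ha, ← hvw, hvu, real_inner_smul_right, real_inner_self_eq_norm_sq, hunorm]
      ring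
    nlinarith [haR, ha2, hεs, hs0.le, hs6, hvn, mul_nonneg hs0.le hs0.le]
  -- conclude
  apply Metric.hausdorffDist_le_of_infDist (by positivity)
  · intro x hx
    have hxn : ‖x‖ ≤ 1 + 6 * s := hclaim x hx
    rcases le_or_gt ‖x‖ 1 with hle | hlt
    · have : x ∈ Metric.closedBall (0 : ESp d) 1 := by
        rw [Metric.mem_closedBall, dist_zero_right]; exact hle
      rw [Metric.infDist_zero_of_mem this]
      positivity
    · set y : ESp d := ‖x‖⁻¹ • x with hy
      have hx0 : (0:ℝ) < ‖x‖ := by linarith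
      have hyB : y ∈ Metric.closedBall (0 : ESp d) 1 := by
        rw [Metric.mem_closedBall, dist_zero_right, hy, norm_smul, norm_inv,
          Real.norm_eq_abs, abs_of_pos hx0, inv_mul_cancel₀ hx0.ne']
      have hdxy : dist x y = ‖x‖ - 1 := by
        rw [dist_eq_norm, hy]
        have : x - ‖x‖⁻¹ • x = (1 - ‖x‖⁻¹) • x := by
          rw [sub_smul, one_smul]
        rw [this, norm_smul, Real.norm_eq_abs, abs_of_nonneg (by
          rw [sub_nonneg]
          rw [inv_le_one_iff₀]
          right; exact hlt.le)]
        field_simp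
      calc Metric.infDist x (Metric.closedBall (0 : ESp d) 1) ≤ dist x y :=
            Metric.infDist_le_dist_of_mem hyB
        _ = ‖x‖ - 1 := hdxy
        _ ≤ 6 * s := by linarith
  · intro y hy
    have h1 : Metric.infDist y P ≤ ε := by
      have h := Metric.infDist_le_hausdorffDist_of_mem hy
        (by rwa [EMetric.hausdorffEdist_comm])
      rw [Metric.hausdorffDist_comm] at h
      exact le_trans h hdist
    have h2 : Metric.infDist y P' ≤ Metric.infDist y P :=
      Metric.infDist_le_infDist_of_subset hPP' hPne
    have h3 : ε ≤ 6 * s := by nlinarith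
    linarith

/-- If `P` is a polytope with `d_H(P, B₁(0)) ≤ ε ≤ 1/36`, then any polytope `P'` whose
vertex set contains that of `P` satisfies `d_H(P', B₁(0)) ≤ 6√ε`. -/
theorem hausdorff_dist_superpolytope
    (d : ℕ) (hd : 1 ≤ d) (ε : ℝ) (hε0 : 0 ≤ ε) (hε : ε ≤ 1 / 36)
    (P P' : Set (ESp d)) (hP : IsPolytope P) (hP' : IsPolytope P')
    (hPne : P.Nonempty) (hP'ne : P'.Nonempty)
    (hsub : verts P ⊆ verts P')
    (hdist : Metric.hausdorffDist P (Metric.closedBall 0 1) ≤ ε) :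
    Metric.hausdorffDist P' (Metric.closedBall 0 1) ≤ 6 * Real.sqrt ε := by
  rcases eq_or_lt_of_le hε0 with hε0' | hεpos
  · -- ε = 0 : use arbitrarily small positive ε'
    have hd0 : Metric.hausdorffDist P (Metric.closedBall (0 : ESp d) 1) = 0 := by
      have := Metric.hausdorffDist_nonneg (s := P)
        (t := Metric.closedBall (0 : ESp d) 1)
      rw [← hε0'] at hdist
      linarith
    have key : ∀ η : ℝ, 0 < η → Metric.hausdorffDist P' (Metric.closedBall 0 1) ≤ η := by
      intro η hη
      set ε' : ℝ := min ((η / 6) ^ 2) (1 / 36) with hε'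
      have hε'pos : 0 < ε' := lt_min (by positivity) (by norm_num)
      have hε'le : ε' ≤ 1 / 36 := min_le_right _ _
      have h := aux_main ε' hε'pos hε'le P P' hP hP' hPne hP'ne hsub
        (by rw [hd0]; exact hε'pos.le)
      have hsq : Real.sqrt ε' ≤ η / 6 := by
        calc Real.sqrt ε' ≤ Real.sqrt ((η / 6) ^ 2) :=
              Real.sqrt_le_sqrt (min_le_left _ _)
          _ = η / 6 := by
              rw [Real.sqrt_sq (by positivity)]
      linarith
    have h0 : Metric.hausdorffDist P' (Metric.closedBall (0 : ESp d) 1) ≤ 0 := by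
      by_contra hcon
      push_neg at hcon
      have := key (Metric.hausdorffDist P' (Metric.closedBall (0 : ESp d) 1) / 2)
        (by linarith)
      linarith
    rw [← hε0', Real.sqrt_zero, mul_zero]
    exact h0
  · exact aux_main ε hεpos hε P P' hP hP' hPne hP'ne hsub hdist
end
end

section
/- Let V be a nonempty finite subset of ℝ^d whose convex hull contains the origin. Then there exist v, w ∈ V with ⟨v, w⟩ ≤ 0. Consequently, if in addition ‖v‖ ≥ 1/√2 for every v ∈ V, then there exist v, w ∈ V with ‖v − w‖ ≥ 1. -/
open scoped RealInnerProductSpace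

noncomputable section

/-- If the convex hull of a nonempty finite `V ⊆ ℝ^d` contains the origin, then some two
points of `V` have nonpositive inner product; consequently, if moreover all points of `V`
have norm at least `1/√2`, then two points of `V` are at distance at least `1`. -/
theorem exists_far_points_of_zero_mem_hull
    (d : ℕ) (V : Finset (ESp d)) (hne : V.Nonempty)
    (h0 : (0 : ESp d) ∈ convexHull ℝ (V : Set (ESp d))) :
    (∃ v ∈ V, ∃ w ∈ V, ⟪v, w⟫ ≤ 0) ∧
    ((∀ v ∈ V, 1 / Real.sqrt 2 ≤ ‖v‖) → ∃ v ∈ V, ∃ w ∈ V, 1 ≤ ‖v - w‖) := by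
  have key : ∃ v ∈ V, ∃ w ∈ V, ⟪v, w⟫ ≤ 0 := by
    by_contra h
    push_neg at h
    obtain ⟨a, ha0, ha1, hc⟩ := (V.mem_convexHull).1 h0
    rw [Finset.centerMass_eq_of_sum_1 _ _ ha1] at hc
    have hz : (0:ℝ) = ⟪(0 : ESp d), (0 : ESp d)⟫ := by simp
    rw [← hc] at hz
    rw [inner_sum] at hz
    simp_rw [sum_inner, real_inner_smul_left, real_inner_smul_right, id] at hz
    have hpos : 0 < ∑ x ∈ V, ∑ y ∈ V, a y * (a x * ⟪y, x⟫) := by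
      obtain ⟨i, hi, hai⟩ : ∃ i ∈ V, 0 < a i := by
        by_contra hno
        push_neg at hno
        have : ∑ y ∈ V, a y = 0 := Finset.sum_eq_zero fun y hy =>
          le_antisymm (hno y hy) (ha0 y hy)
        simp [this] at ha1
      apply Finset.sum_pos'
      · intro y hy
        apply Finset.sum_nonneg
        intro x hx
        exact mul_nonneg (ha0 x hx) (mul_nonneg (ha0 y hy) (h x hx y hy).le)
      · refine ⟨i, hi, Finset.sum_pos' (fun x hx => mul_nonneg (ha0 x hx)
          (mul_nonneg (ha0 i hi) (h x hx i hi).le)) ⟨i, hi, ?_⟩⟩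
        exact mul_pos hai (mul_pos hai (h i hi i hi))
    rw [← hz] at hpos
    exact lt_irrefl _ hpos
  refine ⟨key, fun hnorm => ?_⟩
  obtain ⟨v, hv, w, hw, hvw⟩ := key
  refine ⟨v, hv, w, hw, ?_⟩
  have h12 : (1 / Real.sqrt 2)^2 = 1/2 := by
    rw [div_pow, one_pow, Real.sq_sqrt] <;> norm_num
  have hv2 : (1:ℝ)/2 ≤ ‖v‖^2 := by
    rw [← h12]; exact pow_le_pow_left₀ (by positivity) (hnorm v hv) 2
  have hw2 : (1:ℝ)/2 ≤ ‖w‖^2 := by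
    rw [← h12]; exact pow_le_pow_left₀ (by positivity) (hnorm w hw) 2
  have hexp : ‖v - w‖^2 = ‖v‖^2 - 2 * ⟪v, w⟫ + ‖w‖^2 := by
    rw [norm_sub_sq_real]
  nlinarith [norm_nonneg (v - w), sq_nonneg (‖v - w‖ - 1)]
end
end
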